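/- arXiv:1210.6831 — 7 statements merged into one kernel-verified Lean document; each statement's English description precedes it below -/
import Mathlib

section
/- Let G be a simple graph, f a coloring of G, and u, v distinct vertices with f(u) = f(v) and d(u,v) <= 2, where d denotes graph distance. Let G' be the simple graph obtained from G by identifying u and v, and let h : G -> G' be the quotient map. Then for every closed walk W' in G' there exists a closed walk W in G such that the image walk h(W) is homologous to W' in G'. (Equivalently, the induced homomorphism h_* : H_1(G) -> H_1(G') on first homology is an epimorphism.) -/
open SimpleGraph

/-- The number of steps of the walk `W` from a vertex labeled `i` to a vertex labeled `j`
(with respect to the labeling `f`). -/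
def colorSteps {V C : Type} [DecidableEq C] {G : SimpleGraph V} (f : V → C)
    {x y : V} (W : G.Walk x y) (i j : C) : ℕ :=
  W.darts.countP fun d => decide (f d.toProd.1 = i ∧ f d.toProd.2 = j)

/-- A coloring `f` of `G` is a null coloring if for every closed walk `W` and every ordered
pair `(i, j)` of distinct colors, the number of steps of `W` from a vertex colored `i` to a
vertex colored `j` equals the number of steps from a vertex colored `j` to one colored `i`. -/
def IsNullColoring {V C : Type} [DecidableEq C] (G : SimpleGraph V) (f : V → C) : Prop :=
  ∀ (x : V) (W : G.Walk x x) (i j : C), i ≠ j → colorSteps f W i j = colorSteps f W j i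

/-- A null coloring is maximal if no null coloring of `G` has more color classes
(the number of color classes of a coloring `g` is `(Set.range g).ncard`). -/
def IsMaximalNullColoring {V C : Type} [DecidableEq C] (G : SimpleGraph V) (f : V → C) : Prop :=
  IsNullColoring G f ∧
    ∀ (D : Type) [DecidableEq D] (g : V → D), IsNullColoring G g →
      (Set.range g).ncard ≤ (Set.range f).ncard

/-- The quotient graph `G/f`: vertices are the color classes of `f` (identified with the
range of `f`), two distinct classes being adjacent iff some edge of `G` joins them. -/
def quotientGraph {V C : Type} (G : SimpleGraph V) (f : V → C) :
    SimpleGraph (Set.range f) where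
  Adj a b := a ≠ b ∧ ∃ x y : V, G.Adj x y ∧ f x = a.1 ∧ f y = b.1
  symm := by
    constructor
    rintro a b ⟨hab, x, y, hxy, hx, hy⟩
    exact ⟨hab.symm, y, x, hxy.symm, hy, hx⟩
  loopless := by constructor; rintro a ⟨h, -⟩; exact h rfl

/-- The graph obtained from `G` by identifying the vertices `u` and `v` (the merged vertex
is represented by `u`; any loops created are discarded). -/
def identify {V : Type} (G : SimpleGraph V) (u v : V) : SimpleGraph {x : V // x ≠ v} where
  Adj a b := a ≠ b ∧ (G.Adj a.1 b.1 ∨ (a.1 = u ∧ G.Adj v b.1) ∨ (b.1 = u ∧ G.Adj a.1 v))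
  symm := by
    constructor
    rintro a b ⟨hab, h⟩
    refine ⟨hab.symm, ?_⟩
    rcases h with h | ⟨ha, hb⟩ | ⟨hb, ha⟩
    · exact Or.inl h.symm
    · exact Or.inr (Or.inr ⟨ha, hb.symm⟩)
    · exact Or.inr (Or.inl ⟨hb, ha.symm⟩)
  loopless := by constructor; rintro a ⟨h, -⟩; exact h rfl

/-- The quotient map `h : G → G'` corresponding to the identification of `u` and `v`. -/
def identifyMap {V : Type} [DecidableEq V] (u v : V) (huv : u ≠ v) : V → {x : V // x ≠ v} :=
  fun x => if hx : x = v then ⟨u, huv⟩ else ⟨x, hx⟩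

/-- The net number of steps of `W` from label `a` to label `b`:  steps from `a` to `b`
minus steps from `b` to `a`. -/
def netCount {V C : Type} [DecidableEq C] {G : SimpleGraph V} (f : V → C)
    {x y : V} (W : G.Walk x y) (a b : C) : ℤ :=
  (colorSteps f W a b : ℤ) - (colorSteps f W b a : ℤ)

section Lemmas
variable {V C : Type} [DecidableEq C] {G : SimpleGraph V} (f : V → C)

lemma colorSteps_cons {x y z : V} (h : G.Adj x y) (W : G.Walk y z) (i j : C) :
    colorSteps f (Walk.cons h W) i j
      = colorSteps f W i j + (if f x = i ∧ f y = j then 1 else 0) := by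
  simp [colorSteps, List.countP_cons]

lemma netCount_cons {x y z : V} (h : G.Adj x y) (W : G.Walk y z) (i j : C) :
    netCount f (Walk.cons h W) i j
      = netCount f W i j + ((if f x = i ∧ f y = j then 1 else 0)
          - (if f x = j ∧ f y = i then 1 else 0)) := by
  simp only [netCount, colorSteps_cons]
  push_cast
  split <;> split <;> ring

lemma netCount_append {x y z : V} (W1 : G.Walk x y) (W2 : G.Walk y z) (i j : C) :
    netCount f (W1.append W2) i j = netCount f W1 i j + netCount f W2 i j := by
  simp only [netCount, colorSteps, Walk.darts_append, List.countP_append]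
  push_cast; ring

lemma netCount_copy {x y x' y' : V} (W : G.Walk x y) (hx : x = x') (hy : y = y') (i j : C) :
    netCount f (W.copy hx hy) i j = netCount f W i j := by
  subst hx hy; rfl

lemma netCount_small {x y : V} (hxy : f x = f y) (Q : G.Walk x y) (hQ : Q.length ≤ 2)
    (a b : C) : netCount f Q a b = 0 := by
  cases Q with
  | nil => simp [netCount, colorSteps]
  | @cons _ w _ h1 q =>
    cases q with
    | nil =>
      simp only [netCount, colorSteps, Walk.darts_cons, Walk.darts_nil, List.countP_cons,
        List.countP_nil, hxy]
      simp [and_comm]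
    | cons h2 q2 =>
      cases q2 with
      | nil =>
        simp only [netCount, colorSteps, Walk.darts_cons, Walk.darts_nil, List.countP_cons,
          List.countP_nil, hxy, decide_eq_true_eq]
        by_cases h1 : f w = a <;> by_cases h2 : f y = b <;> by_cases h3 : f y = a <;>
          by_cases h4 : f w = b <;> by_cases h5 : a = b <;> simp [h1, h2, h3, h4, h5, eq_comm]
      | cons h3 q3 => simp at hQ

end Lemmas

lemma identifyMap_of_ne {V : Type} [DecidableEq V] {u v : V} (huv : u ≠ v) {x : V} (hx : x ≠ v) :
    identifyMap u v huv x = ⟨x, hx⟩ := dif_neg hx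

lemma identifyMap_v {V : Type} [DecidableEq V] {u v : V} (huv : u ≠ v) :
    identifyMap u v huv v = ⟨u, huv⟩ := dif_pos rfl

lemma identify_lift {V : Type} [DecidableEq V] (G : SimpleGraph V) (u v : V) (huv : u ≠ v)
    (P : G.Walk u v) (hP : P.length ≤ 2) :
    ∀ {a' b' : {x : V // x ≠ v}} (W' : (identify G u v).Walk a' b'),
      ∃ W : G.Walk a'.1 b'.1, ∀ a b,
        netCount (identifyMap u v huv) W a b = netCount id W' a b := by
  have hmapself : ∀ (z : {x : V // x ≠ v}), identifyMap u v huv z.1 = z := fun z => by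
    rw [identifyMap_of_ne huv z.2]
  have hxy : identifyMap u v huv u = identifyMap u v huv v := by
    rw [identifyMap_of_ne huv huv, identifyMap_v]
  intro a' b' W'
  induction W' with
  | nil => exact ⟨Walk.nil, fun a b => by simp [netCount, colorSteps]⟩
  | @cons a' c' b' hadj W2 ih =>
    obtain ⟨Wl, hWl⟩ := ih
    obtain ⟨hne, hor | ⟨hau, hvb⟩ | ⟨hbu, hav⟩⟩ := id hadj
    · refine ⟨Walk.cons hor Wl, fun a b => ?_⟩
      rw [netCount_cons, netCount_cons, hWl, hmapself, hmapself]
      simp only [id_eq]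
    · have ha' : (⟨u, huv⟩ : {x : V // x ≠ v}) = a' := Subtype.ext hau.symm
      refine ⟨(P.copy hau.symm rfl).append (Walk.cons hvb Wl), fun a b => ?_⟩
      rw [netCount_append, netCount_copy, netCount_small _ hxy P hP,
        netCount_cons, netCount_cons, hWl, hmapself, identifyMap_v, ha']
      simp only [id_eq]; ring
    · have hc' : (⟨u, huv⟩ : {x : V // x ≠ v}) = c' := Subtype.ext hbu.symm
      have hxy' : identifyMap u v huv v = identifyMap u v huv u := hxy.symm
      refine ⟨Walk.cons hav ((P.reverse.copy rfl hbu.symm).append Wl), fun a b => ?_⟩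
      rw [netCount_cons, netCount_append, netCount_copy,
        netCount_small _ hxy' P.reverse (by rw [Walk.length_reverse]; exact hP),
        netCount_cons, hWl, hmapself, identifyMap_v, hc']
      simp only [id_eq]; ring


/-- If `f(u) = f(v)` and `d(u,v) ≤ 2`, then the induced map
`h₁ : H₁(G) → H₁(G')` is an epimorphism: for every closed walk `W'` of `G'` there is a
closed walk `W` of `G` whose image `h(W)` is homologous to `W'` in `G'`
(net step counts agree on every ordered pair of adjacent vertices of `G'`). -/
theorem identify_homology_epi
    {V C : Type} [Fintype V] [DecidableEq V] [DecidableEq C]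
    (G : SimpleGraph V) (f : V → C) (u v : V) (huv : u ≠ v)
    (hfuv : f u = f v) (hreach : G.Reachable u v) (hdist : G.dist u v ≤ 2) :
    ∀ (x' : {x : V // x ≠ v}) (W' : (identify G u v).Walk x' x'),
      ∃ (x : V) (W : G.Walk x x),
        ∀ a b : {x : V // x ≠ v}, (identify G u v).Adj a b →
          netCount (identifyMap u v huv) W a b = netCount id W' a b := by
  intro x' W'
  obtain ⟨P, hPlen⟩ := hreach.exists_walk_length_eq_dist
  obtain ⟨W, hW⟩ := identify_lift G u v huv P (by omega) W'
  exact ⟨x'.1, W, fun a b _ => hW a b⟩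
end

section
/- Let f be a maximal null coloring of a simple graph G. If any two distinct vertices u, v of G with the same color satisfy d(u,v) >= 2 (i.e., no edge of G is monochromatic), then G is a bipartite graph. -/
open SimpleGraph

/-- A multiset of pairs that is invariant under swap and has no "diagonal" element
has even cardinality. -/
lemma even_card_of_swap_eq {α : Type} [DecidableEq α] (m : Multiset (α × α))
    (hswap : m.map Prod.swap = m) (hne : ∀ p ∈ m, p.1 ≠ p.2) :
    Even (Multiset.card m) := by
  induction m using Multiset.strongInductionOn with
  | ih m ih =>
  rcases Multiset.empty_or_exists_mem m with h | ⟨p, hp⟩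
  · simp [h]
  have hcountmap : ∀ q : α × α, (m.map Prod.swap).count q = m.count q.swap := by
    intro q
    conv_lhs => rw [← Prod.swap_swap q]
    exact Multiset.count_map_eq_count' _ _ Prod.swap_injective _
  have hcswap : ∀ q : α × α, m.count q.swap = m.count q := by
    intro q
    conv_rhs => rw [← hswap]
    exact (hcountmap q).symm
  have hpne : p ≠ p.swap := by
    intro h
    exact hne p hp (by rw [Prod.ext_iff] at h; exact h.1)
  have hps : p.swap ∈ m := by
    rw [← Multiset.count_pos, hcswap, Multiset.count_pos]; exact hp
  have hps' : p.swap ∈ m.erase p := Multiset.mem_erase_of_ne (Ne.symm hpne) |>.2 hps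
  set m' : Multiset (α × α) := (m.erase p).erase p.swap with hm'
  have h2 : m = p ::ₘ p.swap ::ₘ m' := by
    rw [hm', Multiset.cons_erase hps', Multiset.cons_erase hp]
  have hcount' : ∀ q : α × α, m.count q =
      m'.count q + (if q = p then 1 else 0) + (if q = p.swap then 1 else 0) := by
    intro q
    rw [h2, Multiset.count_cons, Multiset.count_cons]
    ring
  have hswap' : m'.map Prod.swap = m' := by
    refine Multiset.ext.2 fun q => ?_
    have e1 : (m'.map Prod.swap).count q = m'.count q.swap := by
      conv_lhs => rw [← Prod.swap_swap q]
      exact Multiset.count_map_eq_count' _ _ Prod.swap_injective _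
    rw [e1]
    have h3 := hcount' q.swap
    have h4 := hcount' q
    have h5 := hcswap q
    have e2 : (q.swap = p) ↔ (q = p.swap) :=
      ⟨fun h => by simpa using congrArg Prod.swap h, fun h => by simp [h]⟩
    have e3 : (q.swap = p.swap) ↔ (q = p) :=
      ⟨fun h => by simpa using Prod.swap_injective h, fun h => by simp [h]⟩
    rw [if_congr e2 rfl rfl, if_congr e3 rfl rfl] at h3
    by_cases hq1 : q = p <;> by_cases hq2 : q = p.swap <;>
      simp only [hq1, hq2, if_pos, if_neg, if_true, if_false] at h3 h4 h5 ⊢ <;> omega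
  have hne' : ∀ q ∈ m', q.1 ≠ q.2 := by
    intro q hq
    exact hne q (by rw [h2]; exact Multiset.mem_cons_of_mem (Multiset.mem_cons_of_mem hq))
  have hlt : m' < m := by
    rw [h2]
    calc m' < p.swap ::ₘ m' := Multiset.lt_cons_self _ _
      _ < p ::ₘ p.swap ::ₘ m' := Multiset.lt_cons_self _ _
  have hev := ih m' hlt hswap' hne'
  rw [h2]
  rw [Multiset.card_cons, Multiset.card_cons]
  obtain ⟨k, hk⟩ := hev
  exact ⟨k + 1, by omega⟩

/-- Under a null coloring with no monochromatic edge, every closed walk has even length. -/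
lemma even_length_of_null {V C : Type} [DecidableEq C] {G : SimpleGraph V} {f : V → C}
    (hnull : IsNullColoring G f) (hmono : ∀ x y : V, G.Adj x y → f x ≠ f y)
    (x : V) (W : G.Walk x x) : Even W.length := by
  classical
  set m : Multiset (C × C) :=
    (W.darts : Multiset G.Dart).map (fun d => (f d.toProd.1, f d.toProd.2)) with hm
  have hcount : ∀ i j : C, m.count (i, j) = colorSteps f W i j := by
    intro i j
    rw [hm, Multiset.count_map, ← Multiset.countP_eq_card_filter, Multiset.coe_countP]
    unfold colorSteps
    apply List.countP_congr
    intro d _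
    simp only [decide_eq_true_eq, Prod.mk.injEq]
    exact ⟨fun ⟨h1, h2⟩ => ⟨h1.symm, h2.symm⟩, fun ⟨h1, h2⟩ => ⟨h1.symm, h2.symm⟩⟩
  have hswap : m.map Prod.swap = m := by
    refine Multiset.ext.2 fun q => ?_
    have e1 : (m.map Prod.swap).count q = m.count q.swap := by
      conv_lhs => rw [← Prod.swap_swap q]
      exact Multiset.count_map_eq_count' _ _ Prod.swap_injective _
    rw [e1]
    obtain ⟨i, j⟩ := q
    by_cases hij : i = j
    · subst hij; rfl
    · show m.count (j, i) = m.count (i, j)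
      rw [hcount, hcount]
      exact hnull x W j i (Ne.symm hij)
  have hne : ∀ p ∈ m, p.1 ≠ p.2 := by
    intro p hp
    rw [hm] at hp
    obtain ⟨d, _, rfl⟩ := Multiset.mem_map.1 hp
    exact hmono _ _ d.adj
  have hev := even_card_of_swap_eq m hswap hne
  simpa [hm, SimpleGraph.Walk.length_darts] using hev

/-- If `f` is a maximal null coloring of `G` and no edge of `G` is
monochromatic (any two distinct vertices with the same color are at distance ≥ 2),
then `G` is bipartite, i.e. properly 2-colorable. -/
theorem maximal_null_coloring_no_mono_edge_bipartite
    {V C : Type} [Fintype V] [DecidableEq C]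
    (G : SimpleGraph V) (f : V → C) (hf : IsMaximalNullColoring G f)
    (hmono : ∀ x y : V, G.Adj x y → f x ≠ f y) :
    G.Colorable 2 := by
  classical
  have heven : ∀ (x : V) (W : G.Walk x x), Even W.length :=
    even_length_of_null hf.1 hmono
  let rep : V → V := fun v => (G.connectedComponentMk v).out
  have hre : ∀ v, G.Reachable v (rep v) := by
    intro v
    have h : G.connectedComponentMk (rep v) = G.connectedComponentMk v := Quot.out_eq _
    exact (SimpleGraph.ConnectedComponent.exact h).symm
  let wk : ∀ v, G.Walk v (rep v) := fun v => (hre v).some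
  let c : V → Bool := fun v => decide (Even (wk v).length)
  have hvalid : ∀ {v w : V}, G.Adj v w → c v ≠ c w := by
    intro v w hadj
    have hrep : rep w = rep v := by
      have h : G.connectedComponentMk v = G.connectedComponentMk w :=
        ConnectedComponent.sound hadj.reachable
      simp [rep, h]
    let W : G.Walk v v := (SimpleGraph.Walk.cons hadj (wk w)).append
      (((wk v).copy rfl rfl).reverse.copy hrep.symm rfl)
    have hW : Even W.length := heven v W
    have hlen : W.length = (wk w).length + 1 + (wk v).length := by
      simp [W]
      ring
    rw [hlen] at hW
    intro hcc
    have hcc' : Even (wk v).length ↔ Even (wk w).length := by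
      simpa [c, decide_eq_decide] using hcc
    rw [Nat.even_iff, Nat.even_iff] at hcc'
    rw [Nat.even_iff] at hW
    omega
  have hcol : G.Coloring Bool := SimpleGraph.Coloring.mk c fun h => hvalid h
  simpa using hcol.colorable
end

section
/- Let G and G' be simple graphs and h : V(G) -> V(G') a map such that for every edge xy of G either h(x) = h(y) or h(x)h(y) is an edge of G'. If g' is a null coloring of G', then the composition g = g' composed with h is a null coloring of G. -/
open SimpleGraph

open Classical in
/-- Map a walk in `G` to a walk in `G'` along `h`, skipping steps sent to a single vertex. -/
noncomputable def mapWalkAux {V V' : Type} {G : SimpleGraph V} {G' : SimpleGraph V'} (h : V → V')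
    (hhom : ∀ x y : V, G.Adj x y → h x = h y ∨ G'.Adj (h x) (h y)) :
    ∀ {x y : V}, G.Walk x y → G'.Walk (h x) (h y)
  | _, _, .nil => .nil
  | x, _, .cons (v := z) a p =>
    if heq : h x = h z then (mapWalkAux h hhom p).copy heq.symm rfl
    else .cons ((hhom _ _ a).resolve_left heq) (mapWalkAux h hhom p)

lemma colorSteps_mapWalkAux {V V' C : Type} [DecidableEq C] {G : SimpleGraph V}
    {G' : SimpleGraph V'} (h : V → V')
    (hhom : ∀ x y : V, G.Adj x y → h x = h y ∨ G'.Adj (h x) (h y)) (g' : V' → C)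
    {x y : V} (W : G.Walk x y) (i j : C) (hij : i ≠ j) :
    colorSteps (g' ∘ h) W i j = colorSteps g' (mapWalkAux h hhom W) i j := by
  induction W with
  | nil => rfl
  | @cons x z y a p ih =>
    rw [mapWalkAux]
    by_cases heq : h x = h z
    · rw [dif_pos heq]
      unfold colorSteps
      rw [SimpleGraph.Walk.darts_copy, SimpleGraph.Walk.darts_cons, List.countP_cons]
      have h0 : ¬ ((g' ∘ h) x = i ∧ (g' ∘ h) z = j) := by
        rintro ⟨h1, h2⟩
        exact hij (h1 ▸ h2 ▸ (congrArg g' heq))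
      simp only [Function.comp] at h0 ⊢
      simp only [decide_eq_false h0, if_false, Bool.false_eq_true, add_zero]
      simpa [colorSteps, Function.comp] using ih
    · rw [dif_neg heq]
      unfold colorSteps
      rw [SimpleGraph.Walk.darts_cons, SimpleGraph.Walk.darts_cons, List.countP_cons,
        List.countP_cons]
      unfold colorSteps at ih
      simp only [Function.comp] at ih ⊢
      rw [ih]

/-- If `h : V(G) → V(G')` sends every edge of `G` either to a single vertex or
to an edge of `G'`, and `g'` is a null coloring of `G'`, then `g' ∘ h` is a null coloring
of `G`. -/
theorem null_coloring_comp
    {V V' C : Type} [DecidableEq C]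
    (G : SimpleGraph V) (G' : SimpleGraph V') (h : V → V')
    (hhom : ∀ x y : V, G.Adj x y → h x = h y ∨ G'.Adj (h x) (h y))
    (g' : V' → C) (hg' : IsNullColoring G' g') :
    IsNullColoring G (g' ∘ h) := by
  intro x W i j hij
  rw [colorSteps_mapWalkAux h hhom g' W i j hij,
    colorSteps_mapWalkAux h hhom g' W j i hij.symm]
  exact hg' (h x) (mapWalkAux h hhom W) i j hij
end

section
/- Let G be a simple graph and I a proper subset of V(G) that is an independent set (no edge of G has both endpoints in I). Then the coloring of G that assigns a distinct color to each vertex of I and one further common color to all vertices of V(G) \ I is a null coloring of G, and it has |I| + 1 color classes. -/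
open SimpleGraph

lemma darts_fst_perm_snd {V : Type} {G : SimpleGraph V} {x : V} (W : G.Walk x x) :
    (W.darts.map (·.toProd.1)).Perm (W.darts.map (·.toProd.2)) := by
  have h1 : W.darts.map (·.toProd.1) ++ [x] = W.support := W.map_fst_darts_append
  have h2 : x :: W.darts.map (·.toProd.2) = W.support := W.cons_map_snd_darts
  have h3 : (W.darts.map (·.toProd.1) ++ [x]).Perm (x :: W.darts.map (·.toProd.1)) :=
    List.perm_append_singleton x _
  have : (x :: W.darts.map (·.toProd.1)).Perm (x :: W.darts.map (·.toProd.2)) := by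
    refine h3.symm.trans ?_
    rw [h1, h2]
  exact this.cons_inv

lemma countP_fst_eq_snd {V : Type} {G : SimpleGraph V} {x : V} (W : G.Walk x x)
    (p : V → Bool) :
    W.darts.countP (fun d => p d.toProd.1) = W.darts.countP (fun d => p d.toProd.2) := by
  have := (darts_fst_perm_snd W).countP_eq p
  simpa [List.countP_map, Function.comp_def] using this

/-- If `I` is an independent set which is a proper subset of `V(G)`, then the
coloring assigning a distinct color to each vertex of `I` and one further common color to
all remaining vertices is a null coloring of `G` with `|I| + 1` color classes. -/
theorem independent_set_distinct_colors_null
    {V : Type} [Fintype V] [DecidableEq V]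
    (G : SimpleGraph V) (I : Set V) [DecidablePred (· ∈ I)]
    (hproper : I ≠ Set.univ)
    (hind : ∀ x ∈ I, ∀ y ∈ I, ¬ G.Adj x y) :
    IsNullColoring G (fun x => if hx : x ∈ I then (some ⟨x, hx⟩ : Option I) else none) ∧
    (Set.range (fun x => if hx : x ∈ I then (some ⟨x, hx⟩ : Option I) else none)).ncard
      = I.ncard + 1 := by
  set f : V → Option I := fun x => if hx : x ∈ I then (some ⟨x, hx⟩ : Option I) else none with hf
  have hsome : ∀ (v : V) (a : I), f v = some a ↔ v = (a : V) := by
    intro v a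
    constructor
    · intro h
      by_cases hv : v ∈ I
      · simp only [hf, dif_pos hv] at h
        exact congrArg Subtype.val (Option.some_injective _ h)
      · simp [hf, dif_neg hv] at h
    · rintro rfl
      simp [hf, a.2]
  have hnone : ∀ (v : V), f v = none ↔ v ∉ I := by
    intro v
    by_cases hv : v ∈ I <;> simp [hf, hv]
  constructor
  · -- null coloring
    intro x W i j hij
    -- symmetric claim: suffices to handle (some a, none) and (some a, some b)
    have hzero : ∀ (a b : I), a ≠ b → colorSteps f W (some a) (some b) = 0 := by
      intro a b _
      rw [colorSteps, List.countP_eq_zero]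
      intro d hd
      simp only [decide_eq_true_eq, not_and]
      intro h1 h2
      rw [hsome] at h1 h2
      exact hind _ a.2 _ b.2 (h1 ▸ h2 ▸ d.adj)
    have hmix : ∀ (a : I), colorSteps f W (some a) none = colorSteps f W none (some a) := by
      intro a
      have e1 : colorSteps f W (some a) none
          = W.darts.countP (fun d => decide (f d.toProd.1 = some a)) := by
        rw [colorSteps]
        apply List.countP_congr
        intro d hd
        simp only [decide_eq_true_eq]
        constructor
        · exact fun h => h.1
        · intro h1
          refine ⟨h1, ?_⟩
          rw [hnone]
          rw [hsome] at h1
          intro h2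
          exact hind _ a.2 _ h2 (h1 ▸ d.adj)
      have e2 : colorSteps f W none (some a)
          = W.darts.countP (fun d => decide (f d.toProd.2 = some a)) := by
        rw [colorSteps]
        apply List.countP_congr
        intro d hd
        simp only [decide_eq_true_eq]
        constructor
        · exact fun h => h.2
        · intro h2
          refine ⟨?_, h2⟩
          rw [hnone]
          rw [hsome] at h2
          intro h1
          exact hind _ h1 _ a.2 (h2 ▸ d.adj)
      rw [e1, e2]
      exact countP_fst_eq_snd W (fun v => decide (f v = some a))
    match i, j with
    | none, none => exact absurd rfl hij
    | some a, none => exact hmix a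
    | none, some a => exact (hmix a).symm
    | some a, some b =>
      have hab : a ≠ b := fun h => hij (congrArg some h)
      rw [hzero a b hab, hzero b a hab.symm]
  · -- cardinality
    have hrange : Set.range f = Set.univ := by
      ext c
      simp only [Set.mem_univ, iff_true]
      match c with
      | none =>
        obtain ⟨v, hv⟩ : ∃ v, v ∉ I := by
          by_contra h
          push_neg at h
          exact hproper (Set.eq_univ_of_forall h)
        exact ⟨v, by simp [hf, hv]⟩
      | some a => exact ⟨a.1, by simp [hf, a.2]⟩
    rw [hrange, Set.ncard_univ, Nat.card_eq_fintype_card, Fintype.card_option, 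
      ← Nat.card_eq_fintype_card, Nat.card_coe_set_eq]
end

section
/- Let f be a null coloring of a simple graph G such that any two distinct vertices with the same color are at distance greater than 2. If w is a vertex of G such that no other vertex of G has the color f(w), then no cycle of G passes through w. -/
open SimpleGraph

lemma aux_no_cycle_at
    {V C : Type} [DecidableEq C]
    (G : SimpleGraph V) (f : V → C) (hf : IsNullColoring G f)
    (hfar : ∀ x y : V, x ≠ y → f x = f y →
      ¬ G.Adj x y ∧ ∀ z : V, ¬ (G.Adj x z ∧ G.Adj z y))
    (w : V) (hw : ∀ x : V, x ≠ w → f x ≠ f w)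
    (P : G.Walk w w) (hP : P.IsCycle) : False := by
  cases P with
  | nil => exact G.loopless.irrefl w (by exact absurd hP.three_le_length (by simp))
  | cons h p =>
    rename_i a
    cases p with
    | nil => exact G.loopless.irrefl w h
    | cons hp p' =>
      obtain ⟨b, q, h', hc⟩ := Walk.exists_cons_eq_concat hp p'
      rw [hc] at hP
      have hlen : 1 ≤ q.length := by
        have := hP.three_le_length
        simp [Walk.length_cons, Walk.length_concat] at this
        omega
      have hnd : ((Walk.cons h (q.concat h')).support.tail).Nodup := hP.2
      have hsup : (Walk.cons h (q.concat h')).support.tail = q.support ++ [w] := by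
        simp [Walk.support_concat]
      rw [hsup] at hnd
      have hwq : w ∉ q.support := by
        intro hmem
        have := List.disjoint_of_nodup_append hnd
        exact this hmem (by simp)
      have hqnd : q.support.Nodup := (List.nodup_append.mp hnd).1
      have haw : a ≠ w := h.ne'
      have hbw : b ≠ w := h'.ne
      have hab : a ≠ b := by
        intro hab
        subst hab
        have hpath : q.IsPath := Walk.IsPath.mk' hqnd
        rw [Walk.isPath_iff_eq_nil] at hpath
        subst hpath
        simp at hlen
      have hfab : f a ≠ f b := by
        intro heq
        exact (hfar a b hab heq).2 w ⟨h.symm, h'.symm⟩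
      have hfaw : f a ≠ f w := hw a haw
      have hfbw : f b ≠ f w := hw b hbw
      have hq1 : ∀ d ∈ q.darts, f d.toProd.1 ≠ f w := fun d hd => by
        have : d.toProd.1 ∈ q.support := Walk.dart_fst_mem_support_of_mem_darts _ hd
        exact hw _ (fun he => hwq (he ▸ this))
      have hq2 : ∀ d ∈ q.darts, f d.toProd.2 ≠ f w := fun d hd => by
        have : d.toProd.2 ∈ q.support := Walk.dart_snd_mem_support_of_mem_darts _ hd
        exact hw _ (fun he => hwq (he ▸ this))
      have key := hf w (Walk.cons h (q.concat h')) (f w) (f a) (Ne.symm hfaw)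
      have e1 : colorSteps f (Walk.cons h (q.concat h')) (f w) (f a) = 1 := by
        simp only [colorSteps, Walk.darts_cons, Walk.darts_concat, List.concat_eq_append,
]
        have hz : q.darts.countP (fun d => decide (f d.toProd.1 = f w ∧ f d.toProd.2 = f a)) = 0 := by
          rw [List.countP_eq_zero]
          intro d hd
          simp only [decide_eq_true_eq, not_and]
          intro hh
          exact absurd hh (hq1 d hd)
        rw [List.countP_cons, List.countP_append, hz]
        simp [hfbw]
      have e2 : colorSteps f (Walk.cons h (q.concat h')) (f a) (f w) = 0 := by
        simp only [colorSteps, Walk.darts_cons, Walk.darts_concat, List.concat_eq_append,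
]
        have hz : q.darts.countP (fun d => decide (f d.toProd.1 = f a ∧ f d.toProd.2 = f w)) = 0 := by
          rw [List.countP_eq_zero]
          intro d hd
          simp only [decide_eq_true_eq, not_and]
          intro _ hh
          exact (hq2 d hd) hh
        rw [List.countP_cons, List.countP_append, hz]
        simp [Ne.symm hfaw, Ne.symm hfab]
      rw [e1, e2] at key
      exact one_ne_zero key

/-- Let `f` be a null coloring of `G` in which any two distinct vertices with
the same color are at distance greater than 2 (not adjacent and with no common neighbor).
If no vertex other than `w` has the color `f(w)`, then no cycle of `G` passes through `w`. -/
theorem unique_color_not_on_cycle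
    {V C : Type} [DecidableEq C]
    (G : SimpleGraph V) (f : V → C) (hf : IsNullColoring G f)
    (hfar : ∀ x y : V, x ≠ y → f x = f y →
      ¬ G.Adj x y ∧ ∀ z : V, ¬ (G.Adj x z ∧ G.Adj z y))
    (w : V) (hw : ∀ x : V, x ≠ w → f x ≠ f w) :
    ∀ (x : V) (W : G.Walk x x), W.IsCycle → w ∉ W.support := by
  classical
  intro x W hWc hmem
  exact aux_no_cycle_at G f hf hfar w hw (W.rotate w hmem) (hWc.rotate hmem)
end

section
/- Let G be a connected simple graph, f a maximal null coloring of G, and w a vertex of G such that no cycle of G passes through w and no other vertex of G has the color f(w). Then for every connected component H of the graph G - w (obtained by deleting w), the restriction of f to H is a maximal null coloring of H; moreover, the sets of colors used by f on distinct connected components of G - w are pairwise disjoint. -/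
open SimpleGraph

namespace NullAux

open SimpleGraph Walk

variable {V C D : Type}

lemma colorSteps_append [DecidableEq C] {G : SimpleGraph V} (F : V → C)
    {x y z : V} (W₁ : G.Walk x y) (W₂ : G.Walk y z) (i j : C) :
    colorSteps F (W₁.append W₂) i j = colorSteps F W₁ i j + colorSteps F W₂ i j := by
  simp [colorSteps, Walk.darts_append, List.countP_append]

lemma netCount_append [DecidableEq C] {G : SimpleGraph V} (F : V → C)
    {x y z : V} (W₁ : G.Walk x y) (W₂ : G.Walk y z) (i j : C) :
    netCount F (W₁.append W₂) i j = netCount F W₁ i j + netCount F W₂ i j := by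
  simp only [netCount, colorSteps_append]; push_cast; ring

lemma netCount_pair [DecidableEq C] {G : SimpleGraph V} (F : V → C) {x y : V}
    (h1 : G.Adj x y) (h2 : G.Adj y x) (i j : C) :
    netCount F (Walk.cons h1 (Walk.cons h2 Walk.nil)) i j = 0 := by
  simp only [netCount, colorSteps, Walk.darts_cons, Walk.darts_nil, List.countP_cons,
    List.countP_nil]
  by_cases hxi : F x = i <;> by_cases hyj : F y = j <;> by_cases hyi : F y = i <;>
    by_cases hxj : F x = j <;> by_cases hij : i = j <;> simp [hxi, hyj, hyi, hxj, hij]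

lemma colorSteps_eq_zero_left [DecidableEq C] {G : SimpleGraph V} {F : V → C}
    {x y : V} {W : G.Walk x y} {i j : C} (h : ∀ v ∈ W.support, F v ≠ i) :
    colorSteps F W i j = 0 := by
  unfold colorSteps
  rw [List.countP_eq_zero]
  intro d hd hc
  rw [decide_eq_true_eq] at hc
  exact h _ (W.dart_fst_mem_support_of_mem_darts hd) hc.1

lemma colorSteps_eq_zero_right [DecidableEq C] {G : SimpleGraph V} {F : V → C}
    {x y : V} {W : G.Walk x y} {i j : C} (h : ∀ v ∈ W.support, F v ≠ j) :
    colorSteps F W i j = 0 := by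
  unfold colorSteps
  rw [List.countP_eq_zero]
  intro d hd hc
  rw [decide_eq_true_eq] at hc
  exact h _ (W.dart_snd_mem_support_of_mem_darts hd) hc.2

lemma colorSteps_congr [DecidableEq C] [DecidableEq D] {G : SimpleGraph V}
    {F : V → C} {F' : V → D} {x y : V} (W : G.Walk x y) {i j : C} {i' j' : D}
    (h : ∀ v ∈ W.support, (F v = i ↔ F' v = i') ∧ (F v = j ↔ F' v = j')) :
    colorSteps F W i j = colorSteps F' W i' j' := by
  unfold colorSteps
  apply List.countP_congr
  intro d hd
  have h1 := h d.toProd.1 (W.dart_fst_mem_support_of_mem_darts hd)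
  have h2 := h d.toProd.2 (W.dart_snd_mem_support_of_mem_darts hd)
  simp only [decide_eq_true_eq]
  constructor
  · rintro ⟨a, b⟩; exact ⟨h1.1.mp a, h2.2.mp b⟩
  · rintro ⟨a, b⟩; exact ⟨h1.1.mpr a, h2.2.mpr b⟩

lemma netCount_eq_zero_of_cycles [DecidableEq C] {G : SimpleGraph V} [DecidableEq V]
    {F : V → C}
    (h : ∀ (x : V) (W : G.Walk x x), W.IsCycle → ∀ i j : C, netCount F W i j = 0) :
    ∀ (x : V) (W : G.Walk x x) (i j : C), netCount F W i j = 0 := by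
  suffices H : ∀ (n : ℕ) (x : V) (W : G.Walk x x), W.length ≤ n → ∀ i j : C,
      netCount F W i j = 0 by
    intro x W i j; exact H W.length x W le_rfl i j
  intro n
  induction n with
  | zero =>
    intro x W hW i j
    cases W with
    | nil => simp [netCount, colorSteps]
    | cons h' W' => simp [Walk.length_cons] at hW
  | succ n IH =>
    intro x W hW i j
    by_cases hnd : W.support.tail.Nodup
    · cases W with
      | nil => simp [netCount, colorSteps]
      | @cons _ y _ hadj W' =>
        have hp : W'.IsPath := by
          rw [Walk.isPath_def]
          simpa using hnd
        by_cases he : s(x, y) ∈ W'.edges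
        · cases W' with
          | nil => exact absurd hadj (G.loopless.irrefl x)
          | @cons _ z _ h2 Q =>
            rw [Walk.edges_cons, List.mem_cons] at he
            rcases he with he | he
            · have hzx : z = x := by
                rcases Sym2.eq_iff.mp he with ⟨hh1, hh2⟩ | ⟨hh1, hh2⟩
                · exact absurd hh1 hadj.ne
                · exact hh1.symm
              subst hzx
              have hQ : Q = Walk.nil := Walk.isPath_iff_eq_nil.mp hp.of_cons
              subst hQ
              exact netCount_pair F hadj h2 i j
            · exfalso
              have hy : y ∈ Q.support :=
                Walk.fst_mem_support_of_mem_edges Q (by rwa [Sym2.eq_swap] at he)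
              exact ((Walk.cons_isPath_iff h2 Q).mp hp).2 hy
        · exact h x _ ((Walk.cons_isCycle_iff W' hadj).mpr ⟨hp, he⟩) i j
    · obtain ⟨u, hu⟩ := List.exists_duplicate_iff_not_nodup.mpr hnd
      have hu2 : 2 ≤ W.support.tail.count u := List.duplicate_iff_two_le_count.mp hu
      have hus : u ∈ W.support := List.mem_of_mem_tail hu.mem
      have hrot : ∀ i j : C, netCount F (W.rotate u hus) i j = netCount F W i j := by
        intro i j
        have hperm := (Walk.rotate_darts W u hus).perm
        simp [netCount, colorSteps, hperm.countP_eq]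
      have hlen : (W.rotate u hus).length = W.length := by
        have := (Walk.rotate_darts W u hus).perm.length_eq
        rwa [Walk.length_darts, Walk.length_darts] at this
      have hcount : 2 ≤ (W.rotate u hus).support.tail.count u := by
        rw [(Walk.support_rotate W u hus).perm.count_eq]; exact hu2
      rw [← hrot i j]
      cases hW2 : W.rotate u hus with
      | nil => rw [hW2] at hcount; simp at hcount
      | @cons _ v _ hadj Q =>
        rw [hW2] at hcount hlen
        simp only [Walk.support_cons, List.tail_cons] at hcount
        have huQ : u ∈ Q.support := by
          by_contra hcon
          rw [List.count_eq_zero_of_not_mem hcon] at hcount; omega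
        have hsplit := Q.take_spec huQ
        have hqlen : (Q.takeUntil u huQ).length + (Q.dropUntil u huQ).length = Q.length := by
          have := congrArg Walk.length hsplit
          rwa [Walk.length_append] at this
        have hdlen : 1 ≤ (Q.dropUntil u huQ).length := by
          by_contra hcon
          push_neg at hcon
          have h0 : (Q.dropUntil u huQ).length = 0 := by omega
          have hsup : Q.support =
              (Q.takeUntil u huQ).support ++ (Q.dropUntil u huQ).support.tail := by
            conv_lhs => rw [← hsplit]
            exact Walk.support_append _ _
          have h1 : (Q.dropUntil u huQ).support.tail.length = 0 := by
            have h2 := Walk.length_support (Q.dropUntil u huQ)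
            rw [List.length_tail, h2, h0]
          have hc1 : Q.support.count u =
              (Q.takeUntil u huQ).support.count u +
                (Q.dropUntil u huQ).support.tail.count u := by
            rw [hsup, List.count_append]
          have hc2 := Q.count_support_takeUntil_eq_one huQ
          have hc3 := (List.count_le_length : List.count u (Q.dropUntil u huQ).support.tail ≤ _)
          omega
        have heq : Walk.cons hadj Q =
            (Walk.cons hadj (Q.takeUntil u huQ)).append (Q.dropUntil u huQ) := by
          rw [Walk.cons_append, hsplit]
        rw [heq, netCount_append]
        rw [Walk.length_cons] at hlen
        have le1 : (Walk.cons hadj (Q.takeUntil u huQ)).length ≤ n := by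
          rw [Walk.length_cons]; omega
        have le2 : (Q.dropUntil u huQ).length ≤ n := by omega
        rw [IH u _ le1 i j, IH u _ le2 i j]
        simp

def liftWalk {G : SimpleGraph V} {s : Set V} :
    ∀ {x y : V} (W : G.Walk x y) (h : ∀ v ∈ W.support, v ∈ s),
      (G.induce s).Walk ⟨x, h x W.start_mem_support⟩ ⟨y, h y W.end_mem_support⟩
  | _, _, Walk.nil, _ => Walk.nil
  | _, _, Walk.cons a W, h =>
      Walk.cons (induce_adj.mpr a)
        (liftWalk W fun v hv => h v (by rw [Walk.support_cons]; exact List.mem_cons_of_mem _ hv))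

lemma colorSteps_liftWalk [DecidableEq C] {G : SimpleGraph V} {s : Set V} (F : V → C)
    {x y : V} (W : G.Walk x y) :
    ∀ (h : ∀ v ∈ W.support, v ∈ s) (i j : C),
      colorSteps (fun v : ↥s => F v.1) (liftWalk W h) i j = colorSteps F W i j := by
  induction W with
  | nil => intro h i j; simp [colorSteps, liftWalk]
  | cons a W ih =>
    intro h i j
    simp only [liftWalk, colorSteps, Walk.darts_cons, List.countP_cons]
    have := ih (fun v hv => h v (by rw [Walk.support_cons]; exact List.mem_cons_of_mem _ hv)) i j
    unfold colorSteps at this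
    rw [this]

lemma mem_support_liftWalk {G : SimpleGraph V} {s : Set V} {v : V} :
    ∀ {x y : V} (W : G.Walk x y) (hv : v ∈ W.support)
      (h : ∀ u ∈ W.support, u ∈ s) (p : v ∈ s),
      (⟨v, p⟩ : ↥s) ∈ (liftWalk W h).support := by
  intro x y W
  induction W with
  | nil =>
    intro hv h p
    simp only [Walk.support_nil, List.mem_singleton] at hv
    subst hv
    simp [liftWalk]
  | cons a W ih =>
    intro hv h p
    rw [Walk.support_cons, List.mem_cons] at hv
    simp only [liftWalk, Walk.support_cons, List.mem_cons]
    rcases hv with rfl | hv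
    · exact Or.inl rfl
    · exact Or.inr (ih hv _ p)

lemma colorSteps_map [DecidableEq C] {V' : Type} {G : SimpleGraph V} {G' : SimpleGraph V'}
    (φ : G →g G') (F : V' → C) {x y : V} (W : G.Walk x y) (i j : C) :
    colorSteps F (W.map φ) i j = colorSteps (fun v => F (φ v)) W i j := by
  induction W with
  | nil => simp [colorSteps]
  | cons a W ih =>
    simp only [Walk.map_cons, colorSteps, Walk.darts_cons, List.countP_cons]
    unfold colorSteps at ih
    rw [ih]

lemma comp_of_mem_support {G : SimpleGraph V} [DecidableEq V] {x y v : V}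
    (W : G.Walk x y) (hv : v ∈ W.support) :
    G.connectedComponentMk v = G.connectedComponentMk x :=
  (ConnectedComponent.eq.mpr (W.takeUntil v hv).reachable).symm

end NullAux

/-- Let `G` be connected, `f` a maximal null coloring, and `w` a vertex lying
on no cycle of `G` whose color is used by no other vertex.  Then (a) the restriction of `f`
to each connected component of `G - w` is a maximal null coloring of that component, and
(b) the sets of colors used by `f` on distinct components of `G - w` are pairwise disjoint. -/
theorem delete_unique_color_vertex_components
    {V C : Type} [Fintype V] [DecidableEq V] [DecidableEq C]
    (G : SimpleGraph V) (hG : G.Connected)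
    (f : V → C) (hf : IsMaximalNullColoring G f) (w : V)
    (hcyc : ∀ (x : V) (W : G.Walk x x), W.IsCycle → w ∉ W.support)
    (huniq : ∀ x : V, x ≠ w → f x ≠ f w) :
    (∀ c : (G.induce {x : V | x ≠ w}).ConnectedComponent,
        IsMaximalNullColoring ((G.induce {x : V | x ≠ w}).induce c.supp)
          (fun y => f y.1.1)) ∧
    (∀ c₁ c₂ : (G.induce {x : V | x ≠ w}).ConnectedComponent, c₁ ≠ c₂ →
        ∀ x ∈ c₁.supp, ∀ y ∈ c₂.supp, f x.1 ≠ f y.1) := by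
  classical
  set Gs := G.induce {x : V | x ≠ w} with hGs
  obtain ⟨hfnull, hfmax⟩ := hf
  have hfnet : ∀ (x : V) (W : G.Walk x x) (i j : C), netCount f W i j = 0 := by
    intro x W i j
    by_cases hij : i = j
    · simp [netCount, hij]
    · simp [netCount, hfnull x W i j hij]
  have hcycS : ∀ (x : V) (W : G.Walk x x), W.IsCycle →
      ∀ v ∈ W.support, v ∈ {x : V | x ≠ w} := by
    intro x W hW v hv hveq
    exact hcyc x W hW (hveq ▸ hv)
  have hkey : ∀ (x : V) (W : G.Walk x x), W.IsCycle → ∀ (hx : x ≠ w),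
      ∀ v ∈ W.support, ∃ hv : v ≠ w,
        Gs.connectedComponentMk ⟨v, hv⟩ = Gs.connectedComponentMk ⟨x, hx⟩ := by
    intro x W hW hx v hv
    have hsub := hcycS x W hW
    refine ⟨hsub v hv, ?_⟩
    have hm := NullAux.mem_support_liftWalk W hv hsub (hsub v hv)
    exact NullAux.comp_of_mem_support (NullAux.liftWalk W hsub) hm
  -- Part (b)
  have hdisj : ∀ c₁ c₂ : Gs.ConnectedComponent, c₁ ≠ c₂ →
      ∀ x ∈ c₁.supp, ∀ y ∈ c₂.supp, f x.1 ≠ f y.1 := by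
    intro c₁ c₂ hne x hx y hy hfeq
    set g : V → C × Option Gs.ConnectedComponent := fun v =>
      (f v, if hv : v = w then none else some (Gs.connectedComponentMk ⟨v, hv⟩)) with hgdef
    have hgnull : IsNullColoring G g := by
      intro z W a b hab
      have hz : netCount g W a b = 0 := by
        refine NullAux.netCount_eq_zero_of_cycles ?_ z W a b
        intro z' W' hW' a' b'
        have hz' : z' ≠ w := hcycS z' W' hW' z' W'.start_mem_support
        have hval : ∀ v ∈ W'.support, g v =
            (f v, some (Gs.connectedComponentMk ⟨z', hz'⟩)) := by
          intro v hv
          obtain ⟨hvw, hc⟩ := hkey z' W' hW' hz' v hv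
          simp only [hgdef]
          rw [dif_neg hvw, hc]
        obtain ⟨ia, oa⟩ := a'
        obtain ⟨ib, ob⟩ := b'
        by_cases hoa : oa = some (Gs.connectedComponentMk ⟨z', hz'⟩)
        · by_cases hob : ob = some (Gs.connectedComponentMk ⟨z', hz'⟩)
          · subst hoa hob
            have e1 : colorSteps g W' (ia, some (Gs.connectedComponentMk ⟨z', hz'⟩))
                (ib, some (Gs.connectedComponentMk ⟨z', hz'⟩)) = colorSteps f W' ia ib :=
              NullAux.colorSteps_congr W' (fun v hv => by
                rw [hval v hv]; simp [Prod.ext_iff])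
            have e2 : colorSteps g W' (ib, some (Gs.connectedComponentMk ⟨z', hz'⟩))
                (ia, some (Gs.connectedComponentMk ⟨z', hz'⟩)) = colorSteps f W' ib ia :=
              NullAux.colorSteps_congr W' (fun v hv => by
                rw [hval v hv]; simp [Prod.ext_iff])
            unfold netCount
            rw [e1, e2]
            have := hfnet z' W' ia ib
            unfold netCount at this
            exact this
          · have hB : ∀ v ∈ W'.support, g v ≠ (ib, ob) := by
              intro v hv hh
              rw [hval v hv] at hh
              exact hob (congrArg Prod.snd hh).symm
            unfold netCount
            rw [NullAux.colorSteps_eq_zero_right hB, NullAux.colorSteps_eq_zero_left hB]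
            simp
        · have hA : ∀ v ∈ W'.support, g v ≠ (ia, oa) := by
            intro v hv hh
            rw [hval v hv] at hh
            exact hoa (congrArg Prod.snd hh).symm
          unfold netCount
          rw [NullAux.colorSteps_eq_zero_left hA, NullAux.colorSteps_eq_zero_right hA]
          simp
      unfold netCount at hz
      omega
    have hle := hfmax _ g hgnull
    have hrange : Set.range f = Prod.fst '' Set.range g := by
      rw [← Set.range_comp]
      rfl
    have hgfin : (Set.range g).Finite := Set.finite_range g
    have hxw : x.1 ≠ w := x.2
    have hyw : y.1 ≠ w := y.2
    have hcx : Gs.connectedComponentMk ⟨x.1, hxw⟩ = c₁ :=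
      (ConnectedComponent.mem_supp_iff c₁ x).mp hx
    have hcy : Gs.connectedComponentMk ⟨y.1, hyw⟩ = c₂ :=
      (ConnectedComponent.mem_supp_iff c₂ y).mp hy
    have hgx : g x.1 = (f x.1, some c₁) := by
      simp only [hgdef]
      rw [dif_neg hxw, hcx]
    have hgy : g y.1 = (f y.1, some c₂) := by
      simp only [hgdef]
      rw [dif_neg hyw, hcy]
    have hne2 : g x.1 ≠ g y.1 := by
      rw [hgx, hgy]
      intro hcon
      apply hne
      have := congrArg Prod.snd hcon
      simpa using this
    have himg : Prod.fst '' Set.range g ⊆ Prod.fst '' (Set.range g \ {g x.1}) := by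
      rintro d ⟨z, hz, rfl⟩
      by_cases hzx : z = g x.1
      · refine ⟨g y.1, ⟨⟨y.1, rfl⟩, ?_⟩, ?_⟩
        · simp only [Set.mem_singleton_iff]
          exact fun hcon => hne2 hcon.symm
        · simp [hgy, hzx, hgx, hfeq]
      · exact ⟨z, ⟨hz, hzx⟩, rfl⟩
    have h1 : (Set.range f).ncard ≤ (Set.range g \ {g x.1}).ncard := by
      calc (Set.range f).ncard = (Prod.fst '' Set.range g).ncard := by rw [hrange]
        _ ≤ (Prod.fst '' (Set.range g \ {g x.1})).ncard :=
            Set.ncard_le_ncard himg ((hgfin.diff).image _)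
        _ ≤ (Set.range g \ {g x.1}).ncard := Set.ncard_image_le (hgfin.diff)
    have h2 : (Set.range g \ {g x.1}).ncard < (Set.range g).ncard :=
      Set.ncard_diff_singleton_lt_of_mem ⟨x.1, rfl⟩ hgfin
    omega
  refine ⟨?_, hdisj⟩
  intro c
  constructor
  · -- nullity of the restriction
    intro x W i j hij
    have e : ∀ p q : C, colorSteps (fun y : ↥c.supp => f y.1.1) W p q =
        colorSteps f ((W.map (⟨Subtype.val, fun {a b} h => h⟩ :
            (Gs.induce c.supp) →g Gs)).map (⟨Subtype.val, fun {a b} h => h⟩ :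
            Gs →g G)) p q := by
      intro p q
      rw [NullAux.colorSteps_map, NullAux.colorSteps_map]
      rfl
    rw [e i j, e j i]
    exact hfnull _ _ i j hij
  · -- maximality of the restriction
    intro D _ g hgnull
    set g' : V → D ⊕ C := fun v =>
      if h : ∃ hv : v ≠ w, Gs.connectedComponentMk ⟨v, hv⟩ = c then
        Sum.inl (g ⟨⟨v, h.choose⟩,
          (ConnectedComponent.mem_supp_iff c ⟨v, h.choose⟩).mpr h.choose_spec⟩)
      else Sum.inr (f v) with hg'def
    have hval_in : ∀ u : ↥c.supp, g' u.1.1 = Sum.inl (g u) := by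
      intro u
      have hu : ∃ hv : u.1.1 ≠ w, Gs.connectedComponentMk ⟨u.1.1, hv⟩ = c :=
        ⟨u.1.2, (ConnectedComponent.mem_supp_iff c u.1).mp u.2⟩
      simp only [hg'def]
      rw [dif_pos hu]
    have hval_out : ∀ v : V, ¬ (∃ hv : v ≠ w, Gs.connectedComponentMk ⟨v, hv⟩ = c) →
        g' v = Sum.inr (f v) := by
      intro v hv
      simp only [hg'def]
      rw [dif_neg hv]
    have hg'null : IsNullColoring G g' := by
      intro z W a b hab
      have hz : netCount g' W a b = 0 := by
        refine NullAux.netCount_eq_zero_of_cycles ?_ z W a b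
        intro z' W' hW' a' b'
        have hz' : z' ≠ w := hcycS z' W' hW' z' W'.start_mem_support
        have hsub := hcycS z' W' hW'
        by_cases hc : Gs.connectedComponentMk ⟨z', hz'⟩ = c
        · have hliftmem : ∀ u ∈ (NullAux.liftWalk W' hsub).support, u ∈ c.supp := by
            intro u hu
            rw [ConnectedComponent.mem_supp_iff]
            have hcc := NullAux.comp_of_mem_support (NullAux.liftWalk W' hsub) hu
            rw [hcc]
            exact hc
          have hmemK : ∀ v ∈ W'.support,
              ∃ hv : v ≠ w, Gs.connectedComponentMk ⟨v, hv⟩ = c := by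
            intro v hv
            obtain ⟨h1, h2⟩ := hkey z' W' hW' hz' v hv
            exact ⟨h1, by rw [h2]; exact hc⟩
          have hform : ∀ v ∈ W'.support, ∃ d : D, g' v = Sum.inl d := by
            intro v hv
            simp only [hg'def]
            rw [dif_pos (hmemK v hv)]
            exact ⟨_, rfl⟩
          rcases a' with ia | ia <;> rcases b' with ib | ib
          · -- inl, inl : the main case
            have e : ∀ p q : D ⊕ C, colorSteps g' W' p q =
                colorSteps (fun u : ↥c.supp => g' u.1.1)
                  (NullAux.liftWalk (NullAux.liftWalk W' hsub) hliftmem) p q := by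
              intro p q
              have t1 := NullAux.colorSteps_liftWalk g' W' hsub p q
              have t2 := NullAux.colorSteps_liftWalk (fun v : ↥{x : V | x ≠ w} => g' v.1)
                (NullAux.liftWalk W' hsub) hliftmem p q
              exact (t2.trans t1).symm
            have hW₂null : ∀ p q : D, netCount g
                (NullAux.liftWalk (NullAux.liftWalk W' hsub) hliftmem) p q = 0 := by
              intro p q
              by_cases hpq : p = q
              · simp [netCount, hpq]
              · have := hgnull _ (NullAux.liftWalk (NullAux.liftWalk W' hsub) hliftmem) p q hpq
                simp only [netCount]; omega
            have e1 : colorSteps (fun u : ↥c.supp => g' u.1.1)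
                (NullAux.liftWalk (NullAux.liftWalk W' hsub) hliftmem)
                (Sum.inl ia) (Sum.inl ib) = colorSteps g
                (NullAux.liftWalk (NullAux.liftWalk W' hsub) hliftmem) ia ib :=
              NullAux.colorSteps_congr _ (fun v _ => by rw [hval_in v]; simp)
            have e2 : colorSteps (fun u : ↥c.supp => g' u.1.1)
                (NullAux.liftWalk (NullAux.liftWalk W' hsub) hliftmem)
                (Sum.inl ib) (Sum.inl ia) = colorSteps g
                (NullAux.liftWalk (NullAux.liftWalk W' hsub) hliftmem) ib ia :=
              NullAux.colorSteps_congr _ (fun v _ => by rw [hval_in v]; simp)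
            unfold netCount
            rw [e (Sum.inl ia) (Sum.inl ib), e (Sum.inl ib) (Sum.inl ia), e1, e2]
            have := hW₂null ia ib
            unfold netCount at this
            exact this
          · -- inl, inr
            have hB : ∀ v ∈ W'.support, g' v ≠ Sum.inr ib := by
              intro v hv hh
              obtain ⟨d, hd⟩ := hform v hv
              rw [hd] at hh
              simp at hh
            unfold netCount
            rw [NullAux.colorSteps_eq_zero_right hB, NullAux.colorSteps_eq_zero_left hB]
            simp
          · -- inr, inl
            have hB : ∀ v ∈ W'.support, g' v ≠ Sum.inr ia := by
              intro v hv hh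
              obtain ⟨d, hd⟩ := hform v hv
              rw [hd] at hh
              simp at hh
            unfold netCount
            rw [NullAux.colorSteps_eq_zero_left hB, NullAux.colorSteps_eq_zero_right hB]
            simp
          · -- inr, inr
            have hB : ∀ v ∈ W'.support, g' v ≠ Sum.inr ia := by
              intro v hv hh
              obtain ⟨d, hd⟩ := hform v hv
              rw [hd] at hh
              simp at hh
            have hB' : ∀ v ∈ W'.support, g' v ≠ Sum.inr ib := by
              intro v hv hh
              obtain ⟨d, hd⟩ := hform v hv
              rw [hd] at hh
              simp at hh
            unfold netCount
            rw [NullAux.colorSteps_eq_zero_left hB, NullAux.colorSteps_eq_zero_left hB']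
            simp
        · have hnotK : ∀ v ∈ W'.support,
              ¬ (∃ hv : v ≠ w, Gs.connectedComponentMk ⟨v, hv⟩ = c) := by
            intro v hv hvK
            obtain ⟨h1, h2⟩ := hvK
            obtain ⟨h3, h4⟩ := hkey z' W' hW' hz' v hv
            apply hc
            rw [← h4]
            exact h2
          have hvalout : ∀ v ∈ W'.support, g' v = Sum.inr (f v) :=
            fun v hv => hval_out v (hnotK v hv)
          rcases a' with ia | ia <;> rcases b' with ib | ib
          · have hB : ∀ v ∈ W'.support, g' v ≠ Sum.inl ia := by
              intro v hv hh
              rw [hvalout v hv] at hh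
              simp at hh
            have hB' : ∀ v ∈ W'.support, g' v ≠ Sum.inl ib := by
              intro v hv hh
              rw [hvalout v hv] at hh
              simp at hh
            unfold netCount
            rw [NullAux.colorSteps_eq_zero_left hB, NullAux.colorSteps_eq_zero_left hB']
            simp
          · have hB : ∀ v ∈ W'.support, g' v ≠ Sum.inl ia := by
              intro v hv hh
              rw [hvalout v hv] at hh
              simp at hh
            unfold netCount
            rw [NullAux.colorSteps_eq_zero_left hB, NullAux.colorSteps_eq_zero_right hB]
            simp
          · have hB : ∀ v ∈ W'.support, g' v ≠ Sum.inl ib := by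
              intro v hv hh
              rw [hvalout v hv] at hh
              simp at hh
            unfold netCount
            rw [NullAux.colorSteps_eq_zero_right hB, NullAux.colorSteps_eq_zero_left hB]
            simp
          · have e1 : colorSteps g' W' (Sum.inr ia) (Sum.inr ib) = colorSteps f W' ia ib :=
              NullAux.colorSteps_congr W' (fun v hv => by rw [hvalout v hv]; simp)
            have e2 : colorSteps g' W' (Sum.inr ib) (Sum.inr ia) = colorSteps f W' ib ia :=
              NullAux.colorSteps_congr W' (fun v hv => by rw [hvalout v hv]; simp)
            unfold netCount
            rw [e1, e2]
            have := hfnet z' W' ia ib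
            unfold netCount at this
            exact this
      unfold netCount at hz
      omega
    have hle := hfmax _ g' hg'null
    have hrg' : Set.range g' = Sum.inl '' Set.range g ∪
        Sum.inr '' (f '' {v : V | ¬ ∃ hv : v ≠ w, Gs.connectedComponentMk ⟨v, hv⟩ = c}) := by
      ext d
      constructor
      · rintro ⟨v, rfl⟩
        by_cases hv : ∃ hvw : v ≠ w, Gs.connectedComponentMk ⟨v, hvw⟩ = c
        · left
          refine ⟨g ⟨⟨v, hv.choose⟩,
            (ConnectedComponent.mem_supp_iff c ⟨v, hv.choose⟩).mpr hv.choose_spec⟩,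
            ⟨_, rfl⟩, ?_⟩
          simp only [hg'def]
          rw [dif_pos hv]
        · right
          exact ⟨f v, ⟨v, hv, rfl⟩, (hval_out v hv).symm⟩
      · rintro (⟨d', ⟨u, rfl⟩, rfl⟩ | ⟨d', ⟨v, hv, rfl⟩, rfl⟩)
        · exact ⟨u.1.1, hval_in u⟩
        · exact ⟨v, hval_out v hv⟩
    have hTK : Set.range (fun y : ↥c.supp => f y.1.1) =
        f '' {v : V | ∃ hv : v ≠ w, Gs.connectedComponentMk ⟨v, hv⟩ = c} := by
      ext d
      constructor
      · rintro ⟨u, rfl⟩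
        exact ⟨u.1.1, ⟨u.1.2, (ConnectedComponent.mem_supp_iff c u.1).mp u.2⟩, rfl⟩
      · rintro ⟨v, hv, rfl⟩
        exact ⟨⟨⟨v, hv.choose⟩,
          (ConnectedComponent.mem_supp_iff c ⟨v, hv.choose⟩).mpr hv.choose_spec⟩, rfl⟩
    have hunivf : Set.range f =
        f '' {v : V | ∃ hv : v ≠ w, Gs.connectedComponentMk ⟨v, hv⟩ = c} ∪
        f '' {v : V | ¬ ∃ hv : v ≠ w, Gs.connectedComponentMk ⟨v, hv⟩ = c} := by
      rw [← Set.image_union]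
      have huniv : {v : V | ∃ hv : v ≠ w, Gs.connectedComponentMk ⟨v, hv⟩ = c} ∪
          {v : V | ¬ ∃ hv : v ≠ w, Gs.connectedComponentMk ⟨v, hv⟩ = c} = Set.univ := by
        ext v
        simp only [Set.mem_union, Set.mem_setOf_eq, Set.mem_univ, iff_true]
        exact em _
      rw [huniv, Set.image_univ]
    have hdisjf : Disjoint
        (f '' {v : V | ∃ hv : v ≠ w, Gs.connectedComponentMk ⟨v, hv⟩ = c})
        (f '' {v : V | ¬ ∃ hv : v ≠ w, Gs.connectedComponentMk ⟨v, hv⟩ = c}) := by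
      rw [Set.disjoint_left]
      rintro d ⟨u, hu, rfl⟩ ⟨v, hv, hfv⟩
      obtain ⟨hu1, hu2⟩ := hu
      by_cases hvw : v = w
      · subst hvw
        exact huniq u hu1 hfv.symm
      · refine hdisj c (Gs.connectedComponentMk ⟨v, hvw⟩) ?_
          ⟨u, hu1⟩ ?_ ⟨v, hvw⟩ ?_ hfv.symm
        · intro hcon
          exact hv ⟨hvw, hcon.symm⟩
        · exact (ConnectedComponent.mem_supp_iff _ _).mpr hu2
        · exact (ConnectedComponent.mem_supp_iff _ _).mpr rfl
    have hd2 : Disjoint (Sum.inl '' Set.range g : Set (D ⊕ C))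
        (Sum.inr '' (f '' {v : V | ¬ ∃ hv : v ≠ w,
          Gs.connectedComponentMk ⟨v, hv⟩ = c})) := by
      rw [Set.disjoint_left]
      rintro d ⟨a, _, rfl⟩ ⟨b, _, hcon⟩
      simp at hcon
    have fin1 : (Set.range g).Finite := Set.finite_range g
    have fin2 : (f '' {v : V | ¬ ∃ hv : v ≠ w,
        Gs.connectedComponentMk ⟨v, hv⟩ = c}).Finite := (Set.toFinite _).image f
    have fin3 : (f '' {v : V | ∃ hv : v ≠ w,
        Gs.connectedComponentMk ⟨v, hv⟩ = c}).Finite := (Set.toFinite _).image f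
    have hc1 : (Set.range g').ncard = (Set.range g).ncard +
        (f '' {v : V | ¬ ∃ hv : v ≠ w, Gs.connectedComponentMk ⟨v, hv⟩ = c}).ncard := by
      rw [hrg', Set.ncard_union_eq hd2 (fin1.image _) (fin2.image _),
        Set.ncard_image_of_injective _ Sum.inl_injective,
        Set.ncard_image_of_injective _ Sum.inr_injective]
    have hc2 : (Set.range f).ncard =
        (f '' {v : V | ∃ hv : v ≠ w, Gs.connectedComponentMk ⟨v, hv⟩ = c}).ncard +
        (f '' {v : V | ¬ ∃ hv : v ≠ w, Gs.connectedComponentMk ⟨v, hv⟩ = c}).ncard := by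
      rw [hunivf, Set.ncard_union_eq hdisjf fin3 fin2]
    rw [hTK]
    rw [hc1, hc2] at hle
    omega
end

section
/- Let G be a simple graph, u, v distinct vertices, G' the simple graph obtained from G by identifying u and v, and h : G -> G' the quotient map. If u and v are adjacent in G, then for every cycle C of G' there is a closed walk W in G whose image h(W) is homologous in G' to C; if d(u,v) = 2, the same conclusion holds and moreover W can be chosen to be a single cycle, or the concatenation of two cycles of G sharing a vertex, mapping onto C up to homology. -/
open SimpleGraph

namespace IdentifyAux

def dnet {α : Type} [DecidableEq α] (l : List (α × α)) (a b : α) : ℤ :=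
  (l.countP (fun x => decide (x = (a, b))) : ℤ) - (l.countP (fun x => decide (x = (b, a))) : ℤ)

lemma dnet_nil {α : Type} [DecidableEq α] (a b : α) : dnet [] a b = 0 := by simp [dnet]

lemma dnet_append {α : Type} [DecidableEq α] (l₁ l₂ : List (α × α)) (a b : α) :
    dnet (l₁ ++ l₂) a b = dnet l₁ a b + dnet l₂ a b := by
  simp [dnet, List.countP_append]; ring

lemma dnet_perm {α : Type} [DecidableEq α] {l₁ l₂ : List (α × α)} (h : l₁.Perm l₂) (a b : α) :
    dnet l₁ a b = dnet l₂ a b := by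
  simp only [dnet, h.countP_eq]

lemma dnet_cons {α : Type} [DecidableEq α] (p q : α) (l : List (α × α)) (a b : α) :
    dnet ((p, q) :: l) a b
      = dnet l a b + ((if (p, q) = (a, b) then (1:ℤ) else 0) -
          (if (p, q) = (b, a) then (1:ℤ) else 0)) := by
  simp only [dnet, List.countP_cons, decide_eq_true_eq]
  push_cast
  split_ifs <;> ring

lemma dnet_single {α : Type} [DecidableEq α] (p q : α) (a b : α) :
    dnet [(p, q)] a b = (if (p, q) = (a, b) then (1:ℤ) else 0) -
      (if (p, q) = (b, a) then (1:ℤ) else 0) := by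
  rw [dnet_cons, dnet_nil, zero_add]

lemma dnet_pair {α : Type} [DecidableEq α] (p q : α) (a b : α) :
    dnet [(p, q), (q, p)] a b = 0 := by
  have e1 : ((q, p) = (b, a)) = ((p, q) = (a, b)) := by
    simp only [Prod.mk.injEq, eq_iff_iff]; tauto
  have e2 : ((q, p) = (a, b)) = ((p, q) = (b, a)) := by
    simp only [Prod.mk.injEq, eq_iff_iff]; tauto
  rw [dnet_cons, dnet_single]
  simp only [e1, e2]
  ring

lemma dnet_diag {α : Type} [DecidableEq α] (c : α) {a b : α} (h : a ≠ b) (l : List (α × α)) :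
    dnet ((c, c) :: l) a b = dnet l a b := by
  rw [dnet_cons]
  have e1 : ((c, c) = (a, b)) = False := by
    simp only [Prod.mk.injEq, eq_iff_iff, iff_false]; rintro ⟨rfl, rfl⟩; exact h rfl
  have e2 : ((c, c) = (b, a)) = False := by
    simp only [Prod.mk.injEq, eq_iff_iff, iff_false]; rintro ⟨rfl, rfl⟩; exact h rfl
  simp only [e1, e2, if_false]; ring

lemma colorSteps_eq {V C : Type} [DecidableEq C] {G : SimpleGraph V} (f : V → C)
    {x y : V} (W : G.Walk x y) (i j : C) :
    colorSteps f W i j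
      = (W.darts.map fun d => (f d.toProd.1, f d.toProd.2)).countP
          (fun x => decide (x = (i, j))) := by
  rw [colorSteps, List.countP_map]
  apply List.countP_congr
  intro d _
  simp [Function.comp, Prod.ext_iff]

lemma netCount_eq {V C : Type} [DecidableEq C] {G : SimpleGraph V} (f : V → C)
    {x y : V} (W : G.Walk x y) (a b : C) :
    netCount f W a b = dnet (W.darts.map fun d => (f d.toProd.1, f d.toProd.2)) a b := by
  rw [netCount, dnet, colorSteps_eq, colorSteps_eq]

end IdentifyAux

namespace IdentifyAux

variable {V : Type} [DecidableEq V] {G : SimpleGraph V} {u v : V} (huv : u ≠ v)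

lemma fmap_val (a : {x : V // x ≠ v}) : identifyMap u v huv a.1 = a := by
  simp only [identifyMap, dif_neg a.2]

lemma fmap_v : identifyMap u v huv v = ⟨u, huv⟩ := by simp [identifyMap]

lemma fmap_u : identifyMap u v huv u = ⟨u, huv⟩ := by simp [identifyMap, huv]

/-- colors of a walk's darts under a labeling -/
def wcolors {C : Type} {H : SimpleGraph V} (f : V → C) {x y : V} (W : H.Walk x y) :
    List (C × C) :=
  W.darts.map fun d => (f d.toProd.1, f d.toProd.2)

lemma netCount_eq' {C : Type} [DecidableEq C] {H : SimpleGraph V} (f : V → C) {x y : V}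
    (W : H.Walk x y) (a b : C) : netCount f W a b = dnet (wcolors f W) a b :=
  netCount_eq f W a b

lemma lift_exists (hadj : G.Adj u v) {x y : {x : V // x ≠ v}}
    (W' : (identify G u v).Walk x y) :
    ∃ W : G.Walk x.1 y.1, ∀ a b : {x : V // x ≠ v}, a ≠ b →
      dnet (wcolors (identifyMap u v huv) W) a b = dnet (W'.darts.map fun d => d.toProd) a b := by
  induction W' with
  | nil => exact ⟨.nil, by simp [wcolors, dnet_nil]⟩
  | @cons x y₁ y h p ih =>
    obtain ⟨W, hW⟩ := ih
    simp only [wcolors] at hW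
    rcases h.2 with h1 | ⟨h1, h2⟩ | ⟨h1, h2⟩
    · refine ⟨.cons h1 W, fun a b hab => ?_⟩
      simp only [wcolors, Walk.darts_cons, List.map_cons, fmap_val]
      rw [dnet_cons, dnet_cons, hW a b hab]
    · have hx : x = ⟨u, huv⟩ := Subtype.ext h1
      subst hx
      have hxv : G.Adj u v := hadj
      refine ⟨.cons hxv (.cons h2 W), fun a b hab => ?_⟩
      simp only [wcolors, Walk.darts_cons, List.map_cons, fmap_val, fmap_v, fmap_u]
      rw [dnet_diag _ hab, dnet_cons, dnet_cons, hW a b hab]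
    · have hy : y₁ = ⟨u, huv⟩ := Subtype.ext h1
      subst hy
      have hvy : G.Adj v u := hadj.symm
      refine ⟨.cons h2 (.cons hvy W), fun a b hab => ?_⟩
      simp only [wcolors, Walk.darts_cons, List.map_cons, fmap_val, fmap_v, fmap_u]
      rw [dnet_cons, dnet_diag _ hab, dnet_cons, hW a b hab]

end IdentifyAux

namespace IdentifyAux

section Helpers

variable {V : Type} {G : SimpleGraph V}

open SimpleGraph.Walk

/-- Closing a path with one extra vertex gives a cycle. -/
lemma cycle_close_one {s a c : V} (P : G.Walk a c) (hP : P.IsPath) (hs : s ∉ P.support)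
    (h1 : G.Adj s a) (h2 : G.Adj c s) (hac : a ≠ c) :
    (Walk.cons h1 (P.concat h2)).IsCycle := by
  rw [cons_isCycle_iff]
  constructor
  · rw [isPath_def, support_concat, List.nodup_append']
    exact ⟨hP.support_nodup, List.nodup_singleton s, by simpa using hs⟩
  · rw [edges_concat, List.concat_eq_append]
    intro hmem
    rcases List.mem_append.mp hmem with hmem | hmem
    · exact hs (P.fst_mem_support_of_mem_edges hmem)
    · rw [List.mem_singleton, Sym2.eq_iff] at hmem
      rcases hmem with ⟨hsc, -⟩ | ⟨-, hac'⟩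
      · exact hs (hsc ▸ P.end_mem_support)
      · exact hac hac'

/-- Closing a path with three extra vertices gives a cycle. -/
lemma cycle_close_three {p q₁ q₂ a c : V} (P : G.Walk a c) (hP : P.IsPath)
    (hp : p ∉ P.support) (hq₁ : q₁ ∉ P.support) (hq₂ : q₂ ∉ P.support)
    (hpq₁ : p ≠ q₁) (hpq₂ : p ≠ q₂) (hq₁₂ : q₁ ≠ q₂)
    (h1 : G.Adj p a) (h2 : G.Adj c q₁) (h3 : G.Adj q₁ q₂) (h4 : G.Adj q₂ p) :
    (Walk.cons h1 (P.append (Walk.cons h2 (Walk.cons h3 (Walk.cons h4 Walk.nil))))).IsCycle := by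
  rw [cons_isCycle_iff]
  constructor
  · rw [isPath_def, support_append, List.nodup_append']
    refine ⟨hP.support_nodup, ?_, ?_⟩
    · simp only [support_cons, support_nil, List.tail_cons]
      simp [List.nodup_cons, hq₁₂, (h4.ne : q₂ ≠ p)]
      exact fun h => hpq₁ h.symm
    · intro x hx
      simp only [support_cons, support_nil, List.tail_cons, List.mem_cons,
        List.not_mem_nil, or_false, List.mem_singleton] at *
      rintro (rfl | rfl | rfl)
      · exact hq₁ hx
      · exact hq₂ hx
      · exact hp hx
  · rw [edges_append]
    intro hmem
    rcases List.mem_append.mp hmem with hmem | hmem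
    · exact hp (P.fst_mem_support_of_mem_edges hmem)
    · simp only [edges_cons, edges_nil, List.mem_cons, List.not_mem_nil, or_false] at hmem
      have hpc : p ≠ c := fun h => hp (h ▸ P.end_mem_support)
      have hpa : a ≠ q₂ := fun h => hq₂ (h ▸ P.start_mem_support)
      rcases hmem with h | h | h <;> rw [Sym2.eq_iff] at h
      · rcases h with ⟨h, -⟩ | ⟨h, -⟩
        · exact hpc h
        · exact hpq₁ h
      · rcases h with ⟨h, -⟩ | ⟨h, -⟩
        · exact hpq₁ h
        · exact hpq₂ h
      · rcases h with ⟨h, -⟩ | ⟨-, h⟩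
        · exact hpq₂ h
        · exact hpa h

/-- Closing a path `w ⋯ c` with one extra vertex `q` back to `w` gives a cycle at `w`. -/
lemma cycle_close_back {w c q : V} (P : G.Walk w c) (hP : P.IsPath) (hq : q ∉ P.support)
    (h2 : G.Adj c q) (h3 : G.Adj q w) (hcw : c ≠ w) :
    (P.append (Walk.cons h2 (Walk.cons h3 Walk.nil))).IsCycle := by
  have hqc : c ≠ q := fun h => hq (h ▸ P.end_mem_support)
  have hqw : q ≠ w := fun h => hq (h ▸ P.start_mem_support)
  rw [Walk.isCycle_def]
  refine ⟨?_, ?_, ?_⟩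
  · rw [Walk.isTrail_def, edges_append, List.nodup_append']
    refine ⟨hP.isTrail.edges_nodup, ?_, ?_⟩
    · simp only [edges_cons, edges_nil]
      refine List.nodup_cons.mpr ⟨?_, List.nodup_singleton _⟩
      rw [List.mem_singleton, Sym2.eq_iff]
      rintro (⟨h, -⟩ | ⟨h, -⟩)
      · exact hqc h
      · exact hcw h
    · intro x hx
      simp only [edges_cons, edges_nil, List.mem_cons, List.not_mem_nil, or_false] at *
      rintro (rfl | rfl)
      · exact hq (P.snd_mem_support_of_mem_edges hx)
      · exact hq (P.fst_mem_support_of_mem_edges hx)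
  · intro h
    have := congrArg Walk.length h
    simp [length_append] at this
  · rw [support_append]
    simp only [support_cons, support_nil, List.tail_cons]
    rw [P.support_eq_cons, List.cons_append, List.tail_cons, List.nodup_append']
    have hwtail : w ∉ P.support.tail := by
      have := hP.support_nodup
      rw [P.support_eq_cons, List.nodup_cons] at this
      exact this.1
    refine ⟨hP.support_nodup.tail, ?_, ?_⟩
    · simp [hqw]
    · intro x hx
      have hx' : x ∈ P.support := List.mem_of_mem_tail hx
      simp only [List.mem_cons, List.not_mem_nil, or_false, List.mem_singleton]
      rintro (rfl | rfl)
      · exact hq hx'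
      · exact hwtail hx

end Helpers

end IdentifyAux

namespace IdentifyAux

open SimpleGraph.Walk

variable {V : Type} [DecidableEq V] {G : SimpleGraph V} {u v : V} (huv : u ≠ v)

lemma wcolors_append {C : Type} {H : SimpleGraph V} (f : V → C) {x y z : V}
    (p : H.Walk x y) (q : H.Walk y z) :
    wcolors f (p.append q) = wcolors f p ++ wcolors f q := by
  simp [wcolors, Walk.darts_append]

lemma lift_avoid {x y : {x : V // x ≠ v}} (W' : (identify G u v).Walk x y)
    (hW : ∀ a ∈ W'.support, a ≠ (⟨u, huv⟩ : {x : V // x ≠ v})) :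
    ∃ W : G.Walk x.1 y.1,
      W.support = W'.support.map Subtype.val ∧
      W.edges = W'.edges.map (Sym2.map Subtype.val) ∧
      wcolors (identifyMap u v huv) W = W'.darts.map (fun d => d.toProd) := by
  induction W' with
  | nil => exact ⟨.nil, by simp [wcolors]⟩
  | @cons x y₁ y h p ih =>
    have hx : x.1 ≠ u := fun he =>
      (hW x (by simp)) (Subtype.ext he)
    have hy₁ : y₁.1 ≠ u := fun he =>
      (hW y₁ (by simp [Walk.support_cons, p.start_mem_support])) (Subtype.ext he)
    have hadj : G.Adj x.1 y₁.1 := by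
      rcases h.2 with h1 | ⟨h1, -⟩ | ⟨h1, -⟩
      · exact h1
      · exact (hx h1).elim
      · exact (hy₁ h1).elim
    obtain ⟨W, hs, he, hc⟩ := ih (fun a ha => hW a (by simp [ha]))
    refine ⟨.cons hadj W, ?_, ?_, ?_⟩
    · simp [hs]
    · simp [he]
    · simp only [wcolors, Walk.darts_cons, List.map_cons, fmap_val] at hc ⊢
      rw [hc]

end IdentifyAux

namespace IdentifyAux

open SimpleGraph.Walk

variable {V : Type} [DecidableEq V] {G : SimpleGraph V} {u v : V} (huv : u ≠ v)

lemma part2_avoid {x' : {x : V // x ≠ v}} (W' : (identify G u v).Walk x' x')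
    (hcyc : W'.IsCycle) (hu : (⟨u, huv⟩ : {x : V // x ≠ v}) ∉ W'.support) :
    ∃ W : G.Walk x'.1 x'.1, W.IsCycle ∧
      wcolors (identifyMap u v huv) W = W'.darts.map (fun d => d.toProd) := by
  cases W' with
  | nil => exact absurd rfl hcyc.ne_nil
  | @cons _ y₁ _ h p =>
    rw [Walk.cons_isCycle_iff] at hcyc
    obtain ⟨hp, hedge⟩ := hcyc
    have hW : ∀ a ∈ p.support, a ≠ (⟨u, huv⟩ : {x : V // x ≠ v}) := by
      intro a ha heq
      exact hu (by simp [heq ▸ ha])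
    obtain ⟨W, hs, he, hc⟩ := lift_avoid huv p hW
    have hx : x'.1 ≠ u := by
      intro h'
      have : x' = (⟨u, huv⟩ : {x : V // x ≠ v}) := Subtype.ext h'
      exact hu (this ▸ Walk.start_mem_support _)
    have hy₁ : y₁.1 ≠ u := fun h' => hW y₁ p.start_mem_support (Subtype.ext h')
    have hadj : G.Adj x'.1 y₁.1 := by
      rcases h.2 with h1 | ⟨h1, -⟩ | ⟨h1, -⟩
      · exact h1
      · exact (hx h1).elim
      · exact (hy₁ h1).elim
    refine ⟨.cons hadj W, ?_, ?_⟩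
    · rw [Walk.cons_isCycle_iff]
      constructor
      · rw [isPath_def, hs]
        exact hp.support_nodup.map Subtype.val_injective
      · intro hmem
        rw [he] at hmem
        have : s(x'.1, y₁.1) = Sym2.map Subtype.val s(x', y₁) := by simp
        rw [this] at hmem
        obtain ⟨e, hel, hee⟩ := List.mem_map.mp hmem
        exact hedge ((Sym2.map.injective Subtype.val_injective hee) ▸ hel)
    · simp only [wcolors, Walk.darts_cons, List.map_cons, fmap_val] at hc ⊢
      rw [hc]

end IdentifyAux

namespace IdentifyAux

open SimpleGraph.Walk

section Front

variable {V : Type} {G : SimpleGraph V}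

lemma cycle_close_front {w p a : V} (T : G.Walk a w) (hT : T.IsPath) (hp : p ∉ T.support)
    (h1 : G.Adj w p) (h2 : G.Adj p a) (haw : w ≠ a) :
    (Walk.cons h1 (Walk.cons h2 T)).IsCycle := by
  rw [cons_isCycle_iff]
  constructor
  · rw [isPath_def, support_cons, List.nodup_cons]
    exact ⟨hp, hT.support_nodup⟩
  · simp only [edges_cons, List.mem_cons]
    rintro (h | h)
    · rw [Sym2.eq_iff] at h
      rcases h with ⟨h, -⟩ | ⟨h, -⟩
      · exact h1.ne' h.symm
      · exact haw h
    · exact hp (T.snd_mem_support_of_mem_edges h)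

end Front

variable {V : Type} [DecidableEq V] {G : SimpleGraph V} {u v : V} (huv : u ≠ v)

lemma part2_at_u (hnadj : ¬ G.Adj u v) {w : V} (hw1 : G.Adj u w) (hw2 : G.Adj w v)
    (W'' : (identify G u v).Walk ⟨u, huv⟩ ⟨u, huv⟩) (hcyc : W''.IsCycle) :
    ∃ (x : V) (W : G.Walk x x),
      (∀ a b, dnet (wcolors (identifyMap u v huv) W) a b
          = dnet (W''.darts.map fun d => d.toProd) a b) ∧
      (W.IsCycle ∨ ∃ W₁ W₂ : G.Walk x x, W₁.IsCycle ∧ W₂.IsCycle ∧ W = W₁.append W₂) := by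
  have hwu : w ≠ u := fun h => hnadj (h ▸ hw2)
  have hwv : w ≠ v := hw2.ne
  cases W'' with
  | nil => exact absurd rfl hcyc.ne_nil
  | @cons _ a _ h₁ P =>
    cases P with
    | nil => exact absurd h₁ ((identify G u v).loopless.irrefl _)
    | @cons _ m _ hm P₂ =>
      obtain ⟨c, Q, h₂, hPQ⟩ := Walk.exists_cons_eq_concat hm P₂
      rw [hPQ] at hcyc ⊢
      rw [Walk.cons_isCycle_iff] at hcyc
      obtain ⟨hconc, hedge⟩ := hcyc
      have hsup : (Q.support ++ [(⟨u, huv⟩ : {x : V // x ≠ v})]).Nodup := by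
        have := hconc.support_nodup
        rwa [Walk.support_concat] at this
      have hQnodup : Q.support.Nodup := (List.nodup_append'.mp hsup).1
      have hQu : (⟨u, huv⟩ : {x : V // x ≠ v}) ∉ Q.support := by
        intro hmem
        exact (List.nodup_append'.mp hsup).2.2 hmem (List.mem_singleton_self _)
      have hQpath : Q.IsPath := (Walk.isPath_def Q).mpr hQnodup
      have ha : a ≠ (⟨u, huv⟩ : {x : V // x ≠ v}) := h₁.ne'
      have hc : c ≠ (⟨u, huv⟩ : {x : V // x ≠ v}) := h₂.ne
      have ha1 : a.1 ≠ u := fun h => ha (Subtype.ext h)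
      have hc1 : c.1 ≠ u := fun h => hc (Subtype.ext h)
      have hA : G.Adj u a.1 ∨ G.Adj v a.1 := by
        rcases h₁.2 with h' | ⟨-, h'⟩ | ⟨h', -⟩
        · exact Or.inl h'
        · exact Or.inr h'
        · exact (ha1 h').elim
      have hC : G.Adj c.1 u ∨ G.Adj c.1 v := by
        rcases h₂.2 with h' | ⟨h', -⟩ | ⟨-, h'⟩
        · exact Or.inl h'
        · exact (hc1 h').elim
        · exact Or.inr h'
      obtain ⟨LQ, hs, he, hcol⟩ := lift_avoid huv Q (fun s hsm heq => hQu (heq ▸ hsm))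
      have hLQpath : LQ.IsPath := by
        rw [Walk.isPath_def, hs]
        exact hQnodup.map Subtype.val_injective
      have huLQ : u ∉ LQ.support := by
        rw [hs]
        intro hmem
        obtain ⟨s, hsl, hsv⟩ := List.mem_map.mp hmem
        exact hQu ((Subtype.ext hsv : s = ⟨u, huv⟩) ▸ hsl)
      have hvLQ : v ∉ LQ.support := by
        rw [hs]
        intro hmem
        obtain ⟨s, hsl, hsv⟩ := List.mem_map.mp hmem
        exact s.2 hsv
      have hac : a.1 ≠ c.1 := by
        intro hh
        have hac' : a = c := Subtype.ext hh
        subst hac'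
        have hQnil : Q = .nil := Walk.isPath_iff_eq_nil.mp hQpath
        rw [hQnil] at hedge
        exact hedge (by rw [Sym2.eq_swap]; simp [Walk.concat_nil])
      have hRHS : ((Walk.cons h₁ (Q.concat h₂)).darts.map fun d => d.toProd)
          = [((⟨u, huv⟩ : {x : V // x ≠ v}), a)] ++ (Q.darts.map (fun d => d.toProd)
              ++ [(c, (⟨u, huv⟩ : {x : V // x ≠ v}))]) := by
        simp [Walk.darts_cons, Walk.darts_concat, List.concat_eq_append]
      rw [hRHS]
      simp only [wcolors] at hcol
      have hfw : identifyMap u v huv w = ⟨w, hwv⟩ := by simp [identifyMap, hwv]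
      by_cases hua : G.Adj u a.1
      · by_cases hcu : G.Adj c.1 u
        · -- close through u on both sides
          refine ⟨u, Walk.cons hua (LQ.concat hcu), fun a' b' => ?_,
            Or.inl (cycle_close_one LQ hLQpath huLQ hua hcu hac)⟩
          have hWc : wcolors (identifyMap u v huv) (Walk.cons hua (LQ.concat hcu))
              = [((⟨u, huv⟩ : {x : V // x ≠ v}), a)] ++ (Q.darts.map (fun d => d.toProd)
                  ++ [(c, (⟨u, huv⟩ : {x : V // x ≠ v}))]) := by
            simp only [wcolors, Walk.darts_cons, Walk.darts_concat, List.concat_eq_append,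
              List.map_append, List.map_cons, List.map_nil, List.singleton_append]
            rw [hcol, fmap_u, fmap_val, fmap_val]
          rw [hWc]
        · have hcv : G.Adj c.1 v := hC.resolve_left hcu
          by_cases hva : G.Adj v a.1
          · -- close through v on both sides
            refine ⟨v, Walk.cons hva (LQ.concat hcv), fun a' b' => ?_,
              Or.inl (cycle_close_one LQ hLQpath hvLQ hva hcv hac)⟩
            have hWc : wcolors (identifyMap u v huv) (Walk.cons hva (LQ.concat hcv))
                = [((⟨u, huv⟩ : {x : V // x ≠ v}), a)] ++ (Q.darts.map (fun d => d.toProd)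
                    ++ [(c, (⟨u, huv⟩ : {x : V // x ≠ v}))]) := by
              simp only [wcolors, Walk.darts_cons, Walk.darts_concat, List.concat_eq_append,
                List.map_append, List.map_cons, List.map_nil, List.singleton_append]
              rw [hcol, fmap_v, fmap_val, fmap_val]
            rw [hWc]
          · -- mixed: u → a ⋯ c → v → w → u
            have hwa : w ≠ a.1 := fun h => hva (by rw [← h]; exact hw2.symm)
            have hwc : w ≠ c.1 := fun h => hcu (by rw [← h]; exact hw1.symm)
            by_cases hwQ : w ∈ LQ.support
            · -- split into two cycles at w
              have hspec := LQ.take_spec hwQ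
              have hT₁path : (LQ.takeUntil w hwQ).IsPath := hLQpath.takeUntil hwQ
              have hT₂path : (LQ.dropUntil w hwQ).IsPath := hLQpath.dropUntil hwQ
              have huT₁ : u ∉ (LQ.takeUntil w hwQ).support :=
                fun h => huLQ (LQ.support_takeUntil_subset hwQ h)
              have huT₂ : u ∉ (LQ.dropUntil w hwQ).support :=
                fun h => huLQ (LQ.support_dropUntil_subset hwQ h)
              have hvT₁ : v ∉ (LQ.takeUntil w hwQ).support :=
                fun h => hvLQ (LQ.support_takeUntil_subset hwQ h)
              have hvT₂ : v ∉ (LQ.dropUntil w hwQ).support :=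
                fun h => hvLQ (LQ.support_dropUntil_subset hwQ h)
              refine ⟨w, ((LQ.dropUntil w hwQ).append
                    (Walk.cons hcv (Walk.cons hw2.symm Walk.nil))).append
                  (Walk.cons hw1.symm (Walk.cons hua (LQ.takeUntil w hwQ))), fun a' b' => ?_,
                  Or.inr ⟨_, _,
                    cycle_close_back _ hT₂path hvT₂ hcv hw2.symm (fun h => hwc h.symm),
                    cycle_close_front _ hT₁path huT₁ hw1.symm hua hwa, rfl⟩⟩
              have hQc' : List.map (fun d => d.toProd) Q.darts
                  = wcolors (identifyMap u v huv) (LQ.takeUntil w hwQ)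
                    ++ wcolors (identifyMap u v huv) (LQ.dropUntil w hwQ) := by
                rw [← hcol]
                have hdarts : (LQ.takeUntil w hwQ).darts ++ (LQ.dropUntil w hwQ).darts
                    = LQ.darts := by rw [← Walk.darts_append, hspec]
                simp only [wcolors]
                rw [← hdarts, List.map_append]
              have hWc : wcolors (identifyMap u v huv) (((LQ.dropUntil w hwQ).append
                      (Walk.cons hcv (Walk.cons hw2.symm Walk.nil))).append
                    (Walk.cons hw1.symm (Walk.cons hua (LQ.takeUntil w hwQ))))
                  = wcolors (identifyMap u v huv) (LQ.dropUntil w hwQ)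
                      ++ [(c, (⟨u, huv⟩ : {x : V // x ≠ v}))]
                      ++ [((⟨u, huv⟩ : {x : V // x ≠ v}), (⟨w, hwv⟩ : {x : V // x ≠ v}))]
                      ++ [((⟨w, hwv⟩ : {x : V // x ≠ v}), (⟨u, huv⟩ : {x : V // x ≠ v}))]
                      ++ [((⟨u, huv⟩ : {x : V // x ≠ v}), a)]
                      ++ wcolors (identifyMap u v huv) (LQ.takeUntil w hwQ) := by
                rw [wcolors_append, wcolors_append]
                simp only [wcolors, Walk.darts_cons, Walk.darts_nil, List.map_cons,
                  List.map_nil, fmap_val, fmap_v, fmap_u, hfw]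
                simp [List.append_assoc]
              rw [hWc, hQc']
              have hpair : dnet ([((⟨u, huv⟩ : {x : V // x ≠ v}), (⟨w, hwv⟩ : {x : V // x ≠ v}))]
                    ++ [((⟨w, hwv⟩ : {x : V // x ≠ v}), (⟨u, huv⟩ : {x : V // x ≠ v}))]) a' b'
                  = 0 := dnet_pair _ _ _ _
              rw [dnet_append] at hpair
              simp only [dnet_append]
              linarith
            · -- single cycle through u, v, w
              refine ⟨u, Walk.cons hua (LQ.append
                  (Walk.cons hcv (Walk.cons hw2.symm (Walk.cons hw1.symm Walk.nil)))),
                fun a' b' => ?_,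
                Or.inl (cycle_close_three LQ hLQpath huLQ hvLQ hwQ huv (fun h => hwu h.symm) (fun h => hwv h.symm)
                  hua hcv hw2.symm hw1.symm)⟩
              have hWc : wcolors (identifyMap u v huv) (Walk.cons hua (LQ.append
                    (Walk.cons hcv (Walk.cons hw2.symm (Walk.cons hw1.symm Walk.nil)))))
                  = [((⟨u, huv⟩ : {x : V // x ≠ v}), a)]
                      ++ (wcolors (identifyMap u v huv) LQ
                      ++ [(c, (⟨u, huv⟩ : {x : V // x ≠ v}))]
                      ++ [((⟨u, huv⟩ : {x : V // x ≠ v}), (⟨w, hwv⟩ : {x : V // x ≠ v}))]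
                      ++ [((⟨w, hwv⟩ : {x : V // x ≠ v}), (⟨u, huv⟩ : {x : V // x ≠ v}))]) := by
                simp only [wcolors, Walk.darts_cons, Walk.darts_append, Walk.darts_nil,
                  List.map_cons, List.map_append, List.map_nil, fmap_val, fmap_v, fmap_u, hfw]
                simp [List.append_assoc]
              rw [hWc]
              have hQc' : List.map (fun d => d.toProd) Q.darts
                  = wcolors (identifyMap u v huv) LQ := by rw [← hcol]; rfl
              rw [hQc']
              have hpair : dnet ([((⟨u, huv⟩ : {x : V // x ≠ v}), (⟨w, hwv⟩ : {x : V // x ≠ v}))]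
                    ++ [((⟨w, hwv⟩ : {x : V // x ≠ v}), (⟨u, huv⟩ : {x : V // x ≠ v}))]) a' b'
                  = 0 := dnet_pair _ _ _ _
              rw [dnet_append] at hpair
              simp only [dnet_append]
              linarith
      · have hva : G.Adj v a.1 := hA.resolve_left hua
        by_cases hcv : G.Adj c.1 v
        · -- close through v on both sides
          refine ⟨v, Walk.cons hva (LQ.concat hcv), fun a' b' => ?_,
            Or.inl (cycle_close_one LQ hLQpath hvLQ hva hcv hac)⟩
          have hWc : wcolors (identifyMap u v huv) (Walk.cons hva (LQ.concat hcv))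
              = [((⟨u, huv⟩ : {x : V // x ≠ v}), a)] ++ (Q.darts.map (fun d => d.toProd)
                  ++ [(c, (⟨u, huv⟩ : {x : V // x ≠ v}))]) := by
            simp only [wcolors, Walk.darts_cons, Walk.darts_concat, List.concat_eq_append,
              List.map_append, List.map_cons, List.map_nil, List.singleton_append]
            rw [hcol, fmap_v, fmap_val, fmap_val]
          rw [hWc]
        · have hcu : G.Adj c.1 u := hC.resolve_right hcv
          have hwa : w ≠ a.1 := fun h => hua (by rw [← h]; exact hw1)
          have hwc : w ≠ c.1 := fun h => hcv (by rw [← h]; exact hw2)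
          by_cases hwQ : w ∈ LQ.support
          · -- split into two cycles at w
            have hspec := LQ.take_spec hwQ
            have hT₁path : (LQ.takeUntil w hwQ).IsPath := hLQpath.takeUntil hwQ
            have hT₂path : (LQ.dropUntil w hwQ).IsPath := hLQpath.dropUntil hwQ
            have huT₁ : u ∉ (LQ.takeUntil w hwQ).support :=
              fun h => huLQ (LQ.support_takeUntil_subset hwQ h)
            have huT₂ : u ∉ (LQ.dropUntil w hwQ).support :=
              fun h => huLQ (LQ.support_dropUntil_subset hwQ h)
            have hvT₁ : v ∉ (LQ.takeUntil w hwQ).support :=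
              fun h => hvLQ (LQ.support_takeUntil_subset hwQ h)
            have hvT₂ : v ∉ (LQ.dropUntil w hwQ).support :=
              fun h => hvLQ (LQ.support_dropUntil_subset hwQ h)
            refine ⟨w, ((LQ.dropUntil w hwQ).append
                  (Walk.cons hcu (Walk.cons hw1 Walk.nil))).append
                (Walk.cons hw2 (Walk.cons hva (LQ.takeUntil w hwQ))), fun a' b' => ?_,
                Or.inr ⟨_, _,
                  cycle_close_back _ hT₂path huT₂ hcu hw1 (fun h => hwc h.symm),
                  cycle_close_front _ hT₁path hvT₁ hw2 hva hwa, rfl⟩⟩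
            have hQc' : List.map (fun d => d.toProd) Q.darts
                = wcolors (identifyMap u v huv) (LQ.takeUntil w hwQ)
                  ++ wcolors (identifyMap u v huv) (LQ.dropUntil w hwQ) := by
              rw [← hcol]
              have hdarts : (LQ.takeUntil w hwQ).darts ++ (LQ.dropUntil w hwQ).darts
                  = LQ.darts := by rw [← Walk.darts_append, hspec]
              simp only [wcolors]
              rw [← hdarts, List.map_append]
            have hWc : wcolors (identifyMap u v huv) (((LQ.dropUntil w hwQ).append
                    (Walk.cons hcu (Walk.cons hw1 Walk.nil))).append
                  (Walk.cons hw2 (Walk.cons hva (LQ.takeUntil w hwQ))))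
                = wcolors (identifyMap u v huv) (LQ.dropUntil w hwQ)
                    ++ [(c, (⟨u, huv⟩ : {x : V // x ≠ v}))]
                    ++ [((⟨u, huv⟩ : {x : V // x ≠ v}), (⟨w, hwv⟩ : {x : V // x ≠ v}))]
                    ++ [((⟨w, hwv⟩ : {x : V // x ≠ v}), (⟨u, huv⟩ : {x : V // x ≠ v}))]
                    ++ [((⟨u, huv⟩ : {x : V // x ≠ v}), a)]
                    ++ wcolors (identifyMap u v huv) (LQ.takeUntil w hwQ) := by
              rw [wcolors_append, wcolors_append]
              simp only [wcolors, Walk.darts_cons, Walk.darts_nil, List.map_cons,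
                List.map_nil, fmap_val, fmap_v, fmap_u, hfw]
              simp [List.append_assoc]
            rw [hWc, hQc']
            have hpair : dnet ([((⟨u, huv⟩ : {x : V // x ≠ v}), (⟨w, hwv⟩ : {x : V // x ≠ v}))]
                  ++ [((⟨w, hwv⟩ : {x : V // x ≠ v}), (⟨u, huv⟩ : {x : V // x ≠ v}))]) a' b'
                = 0 := dnet_pair _ _ _ _
            rw [dnet_append] at hpair
            simp only [dnet_append]
            linarith
          · -- single cycle through u, v, w
            refine ⟨v, Walk.cons hva (LQ.append
                (Walk.cons hcu (Walk.cons hw1 (Walk.cons hw2 Walk.nil)))),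
              fun a' b' => ?_,
              Or.inl (cycle_close_three LQ hLQpath hvLQ huLQ hwQ (fun h => huv h.symm) (fun h => hwv h.symm) (fun h => hwu h.symm)
                hva hcu hw1 hw2)⟩
            have hWc : wcolors (identifyMap u v huv) (Walk.cons hva (LQ.append
                  (Walk.cons hcu (Walk.cons hw1 (Walk.cons hw2 Walk.nil)))))
                = [((⟨u, huv⟩ : {x : V // x ≠ v}), a)]
                    ++ (wcolors (identifyMap u v huv) LQ
                    ++ [(c, (⟨u, huv⟩ : {x : V // x ≠ v}))]
                    ++ [((⟨u, huv⟩ : {x : V // x ≠ v}), (⟨w, hwv⟩ : {x : V // x ≠ v}))]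
                    ++ [((⟨w, hwv⟩ : {x : V // x ≠ v}), (⟨u, huv⟩ : {x : V // x ≠ v}))]) := by
              simp only [wcolors, Walk.darts_cons, Walk.darts_append, Walk.darts_nil,
                List.map_cons, List.map_append, List.map_nil, fmap_val, fmap_v, fmap_u, hfw]
              simp [List.append_assoc]
            rw [hWc]
            have hQc' : List.map (fun d => d.toProd) Q.darts
                = wcolors (identifyMap u v huv) LQ := by rw [← hcol]; rfl
            rw [hQc']
            have hpair : dnet ([((⟨u, huv⟩ : {x : V // x ≠ v}), (⟨w, hwv⟩ : {x : V // x ≠ v}))]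
                  ++ [((⟨w, hwv⟩ : {x : V // x ≠ v}), (⟨u, huv⟩ : {x : V // x ≠ v}))]) a' b'
                = 0 := dnet_pair _ _ _ _
            rw [dnet_append] at hpair
            simp only [dnet_append]
            linarith

end IdentifyAux

namespace IdentifyAux

lemma netCount_id_eq {S' : Type} [DecidableEq S'] {H : SimpleGraph S'} {x y : S'}
    (W : H.Walk x y) (a b : S') :
    netCount id W a b = dnet (W.darts.map fun d => d.toProd) a b := by
  rw [netCount_eq]
  rfl

end IdentifyAux

/-- Let `G'` be the graph obtained from `G` by identifying the distinct
vertices `u` and `v`, with quotient map `h`.  If `u` and `v` are adjacent, then for every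
cycle `C` of `G'` there is a closed walk `W` of `G` whose image `h(W)` is homologous to `C`
in `G'`. If `d(u,v) = 2`, the same holds, and moreover `W` can be chosen to be a single
cycle, or to be a concatenation of two cycles of `G` sharing a vertex. -/
theorem identify_homology_epi_on_cycles
    {V : Type} [DecidableEq V]
    (G : SimpleGraph V) (u v : V) (huv : u ≠ v) :
    (G.Adj u v →
      ∀ (x' : {x : V // x ≠ v}) (W' : (identify G u v).Walk x' x'), W'.IsCycle →
        ∃ (x : V) (W : G.Walk x x),
          ∀ a b : {x : V // x ≠ v}, (identify G u v).Adj a b →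
            netCount (identifyMap u v huv) W a b = netCount id W' a b) ∧
    (G.dist u v = 2 →
      ∀ (x' : {x : V // x ≠ v}) (W' : (identify G u v).Walk x' x'), W'.IsCycle →
        ∃ (x : V) (W : G.Walk x x),
          (∀ a b : {x : V // x ≠ v}, (identify G u v).Adj a b →
            netCount (identifyMap u v huv) W a b = netCount id W' a b) ∧
          (W.IsCycle ∨
            ∃ W₁ W₂ : G.Walk x x, W₁.IsCycle ∧ W₂.IsCycle ∧ W = W₁.append W₂)) := by
  constructor
  · intro hadj x' W' _hcyc
    obtain ⟨W, hW⟩ := IdentifyAux.lift_exists huv hadj W'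
    refine ⟨x'.1, W, fun a b hab => ?_⟩
    rw [IdentifyAux.netCount_eq', IdentifyAux.netCount_id_eq]
    exact hW a b hab.ne
  · intro hdist x' W' hcyc
    have hnadj : ¬ G.Adj u v := by
      intro h
      have h1 : G.dist u v = 1 := SimpleGraph.dist_eq_one_iff_adj.mpr h
      omega
    obtain ⟨pw, hpw⟩ := SimpleGraph.exists_walk_of_dist_ne_zero (by rw [hdist]; omega)
    rw [hdist] at hpw
    obtain ⟨w, hw1, hw2⟩ : ∃ w, G.Adj u w ∧ G.Adj w v := by
      cases pw with
      | nil => simp at hpw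
      | cons h q =>
        cases q with
        | nil => simp at hpw
        | cons h2 q2 =>
          cases q2 with
          | nil => exact ⟨_, h, h2⟩
          | cons h3 q3 => simp [SimpleGraph.Walk.length_cons] at hpw
    by_cases hu : (⟨u, huv⟩ : {x : V // x ≠ v}) ∈ W'.support
    · have hperm : ((W'.rotate _ hu).darts.map fun d => d.toProd).Perm
          (W'.darts.map fun d => d.toProd) := ((W'.rotate_darts _ hu).perm).map _
      obtain ⟨x, W, hnet, hstruct⟩ :=
        IdentifyAux.part2_at_u huv hnadj hw1 hw2 (W'.rotate _ hu) (hcyc.rotate hu)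
      refine ⟨x, W, fun a b _ => ?_, hstruct⟩
      rw [IdentifyAux.netCount_eq', IdentifyAux.netCount_id_eq]
      exact (hnet a b).trans (IdentifyAux.dnet_perm hperm a b)
    · obtain ⟨W, hWcyc, hWc⟩ := IdentifyAux.part2_avoid huv W' hcyc hu
      refine ⟨x'.1, W, fun a b _ => ?_, Or.inl hWcyc⟩
      rw [IdentifyAux.netCount_eq', IdentifyAux.netCount_id_eq, hWc]
end
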